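/- arXiv:2403.03902 — 6 statements merged into one kernel-verified Lean document; each statement's English description precedes it below -/
import Mathlib

section
/- For every continuous function f : ℝ² → ℝ with compact support, the limit as δ → 0⁺ of ∫_ℝ ∫_{(0,∞)} f(x,y) · δ·(2y)^{δ−1} dy dx equals (1/2)·∫_ℝ f(x,0) dx. (In other words, the measures L^δ on the upper half-plane with density δ·(2·Im z)^{δ−1} with respect to two-dimensional Lebesgue measure converge vaguely, as δ → 0⁺, to one half of Lebesgue measure on the real line.) -/
open MeasureTheory Filter Topology Set

/-- Change of variables `t = (2y)^δ` in the inner integral. -/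
lemma aux_change_of_variables (f : ℝ × ℝ → ℝ) {δ : ℝ} (hδ : 0 < δ) (x : ℝ) :
    ∫ y in Set.Ioi (0:ℝ), f (x, y) * (δ * (2 * y) ^ (δ - 1)) =
      (1/2) * ∫ t in Set.Ioi (0:ℝ), f (x, t ^ (1/δ) / 2) := by
  have h1 : (fun y : ℝ => f (x, y) * (δ * (2 * y) ^ (δ - 1))) =
      fun y : ℝ => (fun u : ℝ => f (x, u / 2) * (δ * u ^ (δ - 1))) (2 * y) := by
    funext y
    simp only [mul_div_cancel_left₀ y (two_ne_zero (α := ℝ))]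
  rw [h1, integral_comp_mul_left_Ioi (fun u : ℝ => f (x, u / 2) * (δ * u ^ (δ - 1))) 0 two_pos,
    mul_zero]
  have h2 : ∫ u in Set.Ioi (0:ℝ), f (x, u / 2) * (δ * u ^ (δ - 1)) =
      ∫ t in Set.Ioi (0:ℝ), f (x, t ^ (1/δ) / 2) := by
    rw [← integral_comp_rpow_Ioi (fun t : ℝ => f (x, t ^ (1/δ) / 2)) (ne_of_gt hδ)]
    apply setIntegral_congr_fun measurableSet_Ioi
    intro u hu
    have hu0 : (0:ℝ) < u := hu
    have huu : (u ^ δ) ^ (1/δ) = u := by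
      rw [← Real.rpow_mul hu0.le, mul_one_div_cancel (ne_of_gt hδ), Real.rpow_one]
    simp only [smul_eq_mul, huu, abs_of_pos hδ]
    ring
  rw [h2, smul_eq_mul]
  norm_num

/-- For every continuous compactly supported `f : ℝ² → ℝ`, the measures
`L^δ` on the upper half-plane with density `δ·(2y)^{δ−1}` converge vaguely, as `δ → 0⁺`,
to one half of Lebesgue measure on the real line:
`∫_ℝ ∫_{(0,∞)} f(x,y)·δ·(2y)^{δ−1} dy dx → (1/2)·∫_ℝ f(x,0) dx`. -/
theorem approx_boundary_lebesgue (f : ℝ × ℝ → ℝ) (hf : Continuous f)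
    (hsupp : HasCompactSupport f) :
    Tendsto (fun δ : ℝ => ∫ x : ℝ, ∫ y in Set.Ioi (0 : ℝ), f (x, y) * (δ * (2 * y) ^ (δ - 1)))
      (𝓝[>] (0 : ℝ)) (𝓝 ((1 / 2) * ∫ x : ℝ, f (x, 0))) := by
  -- a bound on `f`
  obtain ⟨Cb, hCb⟩ := hf.bounded_above_of_compact_support hsupp
  have hCb0 : 0 ≤ Cb := le_trans (norm_nonneg _) (hCb 0)
  -- a radius containing the support
  obtain ⟨A₀, hA₀⟩ := hsupp.isBounded.subset_closedBall 0
  set A : ℝ := max A₀ 1 with hAdef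
  have hA1 : (1:ℝ) ≤ A := le_max_right _ _
  have hA0 : (0:ℝ) < A := lt_of_lt_of_le one_pos hA1
  have hA : ∀ p : ℝ × ℝ, A < |p.1| ∨ A < |p.2| → f p = 0 := by
    intro p hp
    apply image_eq_zero_of_notMem_tsupport
    intro hmem
    have hb := hA₀ hmem
    rw [Metric.mem_closedBall, dist_zero_right, Prod.norm_def] at hb
    have h1 : ‖p.1‖ ≤ A := le_trans (le_trans (le_max_left _ _) hb) (le_max_left _ _)
    have h2 : ‖p.2‖ ≤ A := le_trans (le_trans (le_max_right _ _) hb) (le_max_left _ _)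
    rw [Real.norm_eq_abs] at h1 h2
    rcases hp with h | h
    · exact absurd h1 (not_le.mpr h)
    · exact absurd h2 (not_le.mpr h)
  -- the product measure and the relevant functions
  set ν : Measure ℝ := volume.restrict (Set.Ioi (0:ℝ)) with hνdef
  set μ : Measure (ℝ × ℝ) := (volume : Measure ℝ).prod ν with hμdef
  set G : ℝ → ℝ × ℝ → ℝ := fun δ p => f (p.1, p.2 ^ (1/δ) / 2) with hGdef
  set g : ℝ × ℝ → ℝ := fun p => if p.2 < 1 then f (p.1, 0) else 0 with hgdef
  set S : Set (ℝ × ℝ) := Set.Icc (-A) A ×ˢ Set.Ioc 0 (2*A) with hSdef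
  have hSmeas : MeasurableSet S := measurableSet_Icc.prod measurableSet_Ioc
  set bound : ℝ × ℝ → ℝ := S.indicator (fun _ => Cb) with hbounddef
  have hbound_nonneg : ∀ p, 0 ≤ bound p := fun p => Set.indicator_nonneg (fun _ _ => hCb0) p
  -- a.e. in μ, the second coordinate is positive
  have hae : ∀ᵐ p ∂μ, 0 < p.2 := by
    rw [ae_iff]
    have hset : {p : ℝ × ℝ | ¬ 0 < p.2} = (Set.univ : Set ℝ) ×ˢ Set.Iic (0:ℝ) := by
      ext p; simp [not_lt]
    rw [hset, hμdef, Measure.prod_prod, hνdef,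
      Measure.restrict_apply measurableSet_Iic]
    have : Set.Iic (0:ℝ) ∩ Set.Ioi (0:ℝ) = ∅ := by
      ext t; simp only [Set.mem_inter_iff, Set.mem_Iic, Set.mem_Ioi, Set.mem_empty_iff_false,
        iff_false, not_and, not_lt]
      exact fun h => h
    rw [this]
    simp
  -- a.e. in μ, the second coordinate is not 1
  have hne1 : ∀ᵐ p ∂μ, p.2 ≠ 1 := by
    rw [ae_iff]
    have hset : {p : ℝ × ℝ | ¬ p.2 ≠ 1} = (Set.univ : Set ℝ) ×ˢ ({1} : Set ℝ) := by
      ext p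
      simp only [Set.mem_setOf_eq, not_not, Set.mem_prod, Set.mem_univ, Set.mem_singleton_iff,
        true_and]
    rw [hset, hμdef, Measure.prod_prod, hνdef,
      Measure.restrict_apply (measurableSet_singleton 1)]
    have : volume (({1} : Set ℝ) ∩ Set.Ioi (0:ℝ)) = 0 :=
      measure_mono_null Set.inter_subset_left (Real.volume_singleton)
    rw [this, mul_zero]
  -- measurability
  have hmeas : ∀ δ : ℝ, 0 < δ → AEStronglyMeasurable (G δ) μ := by
    intro δ hδ
    have hc : Continuous (G δ) := by
      apply hf.comp
      exact continuous_fst.prodMk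
        (((Real.continuous_rpow_const (by positivity)).comp continuous_snd).div_const 2)
    exact hc.aestronglyMeasurable
  -- the uniform bound for δ ∈ (0,1]
  have hb : ∀ δ ∈ Set.Ioc (0:ℝ) 1, ∀ᵐ p ∂μ, ‖G δ p‖ ≤ bound p := by
    intro δ hδ
    filter_upwards [hae] with p hp
    by_cases h1 : A < |p.1|
    · have : G δ p = 0 := hA _ (Or.inl h1)
      rw [this, norm_zero]; exact hbound_nonneg p
    · by_cases h2 : 2*A < p.2
      · have hb1 : (1:ℝ) ≤ p.2 := by nlinarith
        have hmono : p.2 ≤ p.2 ^ (1/δ) := by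
          calc p.2 = p.2 ^ (1:ℝ) := (Real.rpow_one _).symm
          _ ≤ p.2 ^ (1/δ) := Real.rpow_le_rpow_of_exponent_le hb1
              (by rw [le_div_iff₀ hδ.1]; linarith [hδ.2])
        have hgt : A < |p.2 ^ (1/δ) / 2| := by
          have hpos : (0:ℝ) < p.2 ^ (1/δ) / 2 := by
            have : (0:ℝ) < p.2 := lt_trans (by positivity) h2
            positivity
          rw [abs_of_pos hpos]
          linarith
        have : G δ p = 0 := hA _ (Or.inr hgt)
        rw [this, norm_zero]; exact hbound_nonneg p
      · have hmem : p ∈ S := ⟨Set.mem_Icc.mpr (abs_le.mp (not_lt.mp h1)), hp, not_lt.mp h2⟩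
        rw [hbounddef]
        simp only [Set.indicator_of_mem hmem]
        exact hCb _
  -- bound is integrable
  have hμS : μ S < ⊤ := by
    rw [hSdef, hμdef, Measure.prod_prod, hνdef, Measure.restrict_apply measurableSet_Ioc]
    exact ENNReal.mul_lt_top (measure_Icc_lt_top) (lt_of_le_of_lt
      (measure_mono Set.inter_subset_left) measure_Ioc_lt_top)
  have hbound_int : Integrable bound μ := by
    rw [hbounddef, integrable_indicator_iff hSmeas]
    exact (integrableOn_const_iff).mpr (Or.inr hμS)
  -- pointwise convergence
  have hlim : ∀ᵐ p ∂μ, Tendsto (fun δ => G δ p) (𝓝[>] (0:ℝ)) (𝓝 (g p)) := by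
    filter_upwards [hae, hne1] with p hp hp1
    have h10 : Tendsto (fun δ : ℝ => 1/δ) (𝓝[>] (0:ℝ)) atTop := by
      simpa [one_div] using tendsto_inv_nhdsGT_zero (𝕜 := ℝ)
    rcases lt_or_gt_of_ne hp1 with hlt | hgt
    · -- p.2 < 1 : the base tends to 0
      have h0 : Tendsto (fun δ : ℝ => p.2 ^ (1/δ)) (𝓝[>] (0:ℝ)) (𝓝 0) :=
        (tendsto_rpow_atTop_of_base_lt_one p.2 (by linarith) hlt).comp h10
      have hpair : Tendsto (fun δ : ℝ => ((p.1 : ℝ), p.2 ^ (1/δ) / 2)) (𝓝[>] (0:ℝ))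
          (𝓝 (p.1, 0)) := by
        have := tendsto_const_nhds (α := ℝ) (x := p.1)
          (f := (𝓝[>] (0:ℝ))) |>.prodMk_nhds (h0.div_const 2)
        simpa using this
      have hft : Tendsto (fun δ : ℝ => f (p.1, p.2 ^ (1/δ) / 2)) (𝓝[>] (0:ℝ))
          (𝓝 (f (p.1, 0))) := (hf.tendsto _).comp hpair
      have : g p = f (p.1, 0) := if_pos hlt
      rw [this]
      exact hft
    · -- p.2 > 1 : the base tends to ∞, hence f vanishes eventually
      have hbase : Tendsto (fun u : ℝ => p.2 ^ u) atTop atTop := by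
        have hp2 : (0:ℝ) < p.2 := by linarith
        simp_rw [Real.rpow_def_of_pos hp2]
        exact Real.tendsto_exp_atTop.comp
          (Tendsto.const_mul_atTop (Real.log_pos hgt) tendsto_id)
      have h0 : Tendsto (fun δ : ℝ => p.2 ^ (1/δ)) (𝓝[>] (0:ℝ)) atTop := hbase.comp h10
      have hev : ∀ᶠ δ in 𝓝[>] (0:ℝ), G δ p = 0 := by
        filter_upwards [h0.eventually_gt_atTop (2*A)] with δ hδ
        apply hA
        right
        have hpos : (0:ℝ) < p.2 ^ (1/δ) / 2 := by
          have : (0:ℝ) < p.2 ^ (1/δ) := lt_trans (by positivity) hδ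
          positivity
        rw [abs_of_pos hpos]
        linarith
      have : g p = 0 := if_neg (not_lt.mpr hgt.le)
      rw [this]
      exact Tendsto.congr' (hev.mono fun δ h => h.symm) tendsto_const_nhds
  -- dominated convergence
  have hFmeas : ∀ᶠ δ in 𝓝[>] (0:ℝ), AEStronglyMeasurable (G δ) μ := by
    filter_upwards [Ioc_mem_nhdsGT_of_mem (Set.mem_Ico.mpr ⟨le_refl (0:ℝ), one_pos⟩)] with δ hδ
    exact hmeas δ hδ.1
  have hbound_ev : ∀ᶠ δ in 𝓝[>] (0:ℝ), ∀ᵐ p ∂μ, ‖G δ p‖ ≤ bound p := by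
    filter_upwards [Ioc_mem_nhdsGT_of_mem (Set.mem_Ico.mpr ⟨le_refl (0:ℝ), one_pos⟩)] with δ hδ
    exact hb δ hδ
  have hmain : Tendsto (fun δ => ∫ p, G δ p ∂μ) (𝓝[>] (0:ℝ)) (𝓝 (∫ p, g p ∂μ)) :=
    tendsto_integral_filter_of_dominated_convergence bound hFmeas hbound_ev hbound_int hlim
  -- integrability of g and the limit value
  have hgmeas : AEStronglyMeasurable g μ := by
    have : Measurable g := by
      apply Measurable.ite
      · exact measurableSet_lt measurable_snd measurable_const
      · exact (hf.measurable.comp (measurable_fst.prodMk measurable_const))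
      · exact measurable_const
    exact this.aestronglyMeasurable
  have hg_int : Integrable g μ := by
    apply hbound_int.mono' hgmeas
    filter_upwards [hae] with p hp
    by_cases hlt : p.2 < 1
    · have hgp : g p = f (p.1, 0) := if_pos hlt
      by_cases h1 : A < |p.1|
      · rw [hgp, hA (p.1, 0) (Or.inl h1), norm_zero]; exact hbound_nonneg p
      · have hmem : p ∈ S := ⟨Set.mem_Icc.mpr (abs_le.mp (not_lt.mp h1)), hp, by linarith⟩
        rw [hgp, hbounddef]
        simp only [Set.indicator_of_mem hmem]
        exact hCb _
    · have hgp : g p = 0 := if_neg hlt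
      rw [hgp, norm_zero]; exact hbound_nonneg p
  have hgval : ∫ p, g p ∂μ = ∫ x : ℝ, f (x, 0) := by
    rw [hμdef, MeasureTheory.integral_prod _ hg_int]
    congr 1
    funext x
    have hswap : (fun t : ℝ => g (x, t)) = (Set.Iio (1:ℝ)).indicator (fun _ => f (x, 0)) := by
      funext t
      by_cases h : t < 1
      · simp [hgdef, h, Set.indicator_of_mem (Set.mem_Iio.mpr h)]
      · simp [hgdef, h, Set.indicator_of_notMem (fun hc => h (Set.mem_Iio.mp hc))]
    rw [hνdef, hswap, integral_indicator measurableSet_Iio,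
      Measure.restrict_restrict measurableSet_Iio, setIntegral_const]
    have : Set.Iio (1:ℝ) ∩ Set.Ioi (0:ℝ) = Set.Ioo 0 1 := by
      rw [Set.inter_comm, Set.Ioi_inter_Iio]
    rw [this, Real.volume_real_Ioo]
    norm_num
  -- integrability of G δ for δ ∈ (0,1] and Fubini
  have hGint : ∀ δ ∈ Set.Ioc (0:ℝ) 1, Integrable (G δ) μ := fun δ hδ =>
    hbound_int.mono' (hmeas δ hδ.1) (hb δ hδ)
  -- conclude
  have final : Tendsto (fun δ => (1/2 : ℝ) * ∫ p, G δ p ∂μ) (𝓝[>] (0:ℝ))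
      (𝓝 ((1/2 : ℝ) * ∫ x : ℝ, f (x, 0))) := by
    rw [← hgval]
    exact hmain.const_mul (1/2)
  apply final.congr'
  filter_upwards [Ioc_mem_nhdsGT_of_mem (Set.mem_Ico.mpr ⟨le_refl (0:ℝ), one_pos⟩)] with δ hδ
  rw [hμdef, MeasureTheory.integral_prod _ (hGint δ hδ)]
  rw [← MeasureTheory.integral_const_mul]
  congr 1
  funext x
  exact (aux_change_of_variables f hδ.1 x).symm
end

section
/- Let (X, 𝒜, λ) be a measure space, ρ : X → (0,1) a measurable function, p ∈ (−1, 0), and f : X → [0,∞) measurable with ∫ f dλ < ∞. Suppose that u^p · ∫_{{ρ < u}} f dλ → L as u → 0⁺, for some L ∈ [0,∞). Then δ · ∫ f · ρ^{p+δ} dλ → (−p)·L as δ → 0⁺ (where δ ranges over (0, −p)). -/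
open MeasureTheory Filter Topology Set
open scoped ENNReal NNReal

/-- If `u^p · ∫_{ρ < u} f dλ → L` as `u → 0⁺` (with `ρ` taking values in `(0,1)`,
`p ∈ (−1,0)`, `f ≥ 0` integrable), then `δ · ∫ f · ρ^{p+δ} dλ → (−p)·L` as `δ → 0⁺`
(with `δ` ranging over `(0, −p)`). -/
theorem onesided_minkowski_approx {X : Type*} [MeasurableSpace X] (lam : Measure X)
    (ρ : X → ℝ) (hρ : Measurable ρ) (hρ01 : ∀ x, ρ x ∈ Set.Ioo (0 : ℝ) 1)
    (p : ℝ) (hp : p ∈ Set.Ioo (-1 : ℝ) 0)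
    (f : X → ℝ) (hf : Measurable f) (hf0 : ∀ x, 0 ≤ f x) (hfi : Integrable f lam)
    (L : ℝ) (hL : 0 ≤ L)
    (hlim : Tendsto (fun u : ℝ => u ^ p * ∫ x in {x | ρ x < u}, f x ∂lam)
      (𝓝[>] (0 : ℝ)) (𝓝 L)) :
    Tendsto (fun δ : ℝ => δ * ∫ x, f x * ρ x ^ (p + δ) ∂lam)
      (𝓝[Set.Ioo (0 : ℝ) (-p)] (0 : ℝ)) (𝓝 (-p * L)) := by
  obtain ⟨hp1, hp0⟩ := hp
  have hnp : (0 : ℝ) < -p := by linarith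
  -- the pushforward of `f·λ` under `ρ`
  set ν : Measure X := lam.withDensity fun x => ENNReal.ofReal (f x) with hνdef
  set μ : Measure ℝ := ν.map ρ with hμdef
  have hμIio : ∀ u : ℝ, μ (Iio u) = ∫⁻ x in {x | ρ x < u}, ENNReal.ofReal (f x) ∂lam := by
    intro u
    rw [hμdef, Measure.map_apply hρ measurableSet_Iio, hνdef,
      withDensity_apply _ (hρ measurableSet_Iio)]
    rfl
  have hofReal_eq : (fun x => ENNReal.ofReal (f x)) = fun x => (‖f x‖₊ : ℝ≥0∞) := by
    funext x; rw [← enorm_eq_nnnorm, Real.enorm_eq_ofReal (hf0 x)]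
  have hνuniv : ν univ ≠ ⊤ := by
    rw [hνdef, withDensity_apply _ MeasurableSet.univ, Measure.restrict_univ, hofReal_eq]
    exact hfi.2.ne
  have hμuniv : μ univ ≠ ⊤ := by
    rw [hμdef, Measure.map_apply hρ MeasurableSet.univ, Set.preimage_univ]
    exact hνuniv
  haveI : IsFiniteMeasure μ := ⟨lt_top_iff_ne_top.2 hμuniv⟩
  set Fr : ℝ → ℝ := fun u => (μ (Iio u)).toReal with hFrdef
  have hFrfin : ∀ u, μ (Iio u) ≠ ⊤ := fun u => (measure_lt_top μ _).ne
  have hFrmono : Monotone Fr := fun a b hab =>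
    ENNReal.toReal_mono (hFrfin b) (measure_mono (Iio_subset_Iio hab))
  have hFrmeas : Measurable Fr := hFrmono.measurable
  have hFr0 : ∀ u, 0 ≤ Fr u := fun u => ENNReal.toReal_nonneg
  have hFrle : ∀ u, Fr u ≤ (μ univ).toReal := fun u =>
    ENNReal.toReal_mono hμuniv (measure_mono (subset_univ _))
  -- rewrite the hypothesis in terms of `Fr`
  have hF : ∀ u : ℝ, (∫ x in {x | ρ x < u}, f x ∂lam) = Fr u := by
    intro u
    show _ = (μ (Iio u)).toReal
    rw [hμIio u, integral_eq_lintegral_of_nonneg_ae (ae_of_all _ fun x => hf0 x)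
      hf.aestronglyMeasurable]
  have hlimG : Tendsto (fun u : ℝ => u ^ p * Fr u) (𝓝[>] (0 : ℝ)) (𝓝 L) :=
    hlim.congr fun u => by rw [hF]
  -- a uniform bound for `u ^ p * Fr u` on `(0,1)`
  obtain ⟨M, hM0, hM⟩ : ∃ M : ℝ, 0 ≤ M ∧ ∀ u ∈ Ioo (0 : ℝ) 1, u ^ p * Fr u ≤ M := by
    have h1 : ∀ᶠ u in 𝓝[>] (0 : ℝ), u ^ p * Fr u < L + 1 :=
      hlimG.eventually_lt_const (by linarith)
    rw [eventually_iff, mem_nhdsGT_iff_exists_Ioo_subset] at h1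
    obtain ⟨ε, hε, hsub⟩ := h1
    have hε0 : (0 : ℝ) < ε := hε
    refine ⟨(L + 1) + (μ univ).toReal * ε ^ p, by positivity, fun u hu => ?_⟩
    by_cases hcase : u < ε
    · have h2 : u ^ p * Fr u < L + 1 := hsub ⟨hu.1, hcase⟩
      have h3 : 0 ≤ (μ univ).toReal * ε ^ p := by positivity
      linarith
    · push_neg at hcase
      have hup : u ^ p ≤ ε ^ p := Real.rpow_le_rpow_of_nonpos hε0 hcase hp0.le
      have h2 : u ^ p * Fr u ≤ ε ^ p * (μ univ).toReal := by
        have hu0 : 0 ≤ u ^ p := Real.rpow_nonneg hu.1.le p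
        have := mul_le_mul hup (hFrle u) (hFr0 u) (Real.rpow_nonneg hε0.le p)
        linarith
      nlinarith [Real.rpow_nonneg hε0.le p, ENNReal.toReal_nonneg (a := μ univ)]
  have hμsupp : ∀ᵐ t ∂μ, t ∈ Ioo (0 : ℝ) 1 := by
    rw [hμdef]
    exact (MeasureTheory.ae_map_iff hρ.aemeasurable measurableSet_Ioo).2 (ae_of_all _ hρ01)
  have key : ∀ q : ℝ, p < q → q < 0 →
      ∫ x, f x * ρ x ^ q ∂lam
        = (μ univ).toReal + (-q) * ∫ u in Ioo (0 : ℝ) 1, u ^ (q - 1) * Fr u := by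
    intro q hqp hq0
    have hq1 : (-1 : ℝ) < q := lt_trans hp1 hqp
    have hqne : q ≠ 0 := ne_of_lt hq0
    set g : ℝ → ℝ≥0∞ := fun u => ENNReal.ofReal (-q * u ^ (q - 1)) with hgdef
    have hgmeas : Measurable g :=
      ENNReal.measurable_ofReal.comp (measurable_const.mul (measurable_id.pow measurable_const))
    -- pointwise layer-cake identity
    have hpt : ∀ t ∈ Ioo (0 : ℝ) 1, ENNReal.ofReal (t ^ q)
        = 1 + ∫⁻ u in Ioo (0 : ℝ) 1, (Ioo t 1).indicator g u := by
      intro t ht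
      have h1 : ∫⁻ u in Ioo (0 : ℝ) 1, (Ioo t 1).indicator g u = ∫⁻ u in Ioo t 1, g u := by
        rw [lintegral_indicator measurableSet_Ioo, Measure.restrict_restrict measurableSet_Ioo,
          inter_eq_self_of_subset_left (Ioo_subset_Ioo_left ht.1.le)]
      have hint : IntegrableOn (fun u : ℝ => -q * u ^ (q - 1)) (Ioo t 1) := by
        apply (ContinuousOn.integrableOn_Icc ?_).mono_set Ioo_subset_Icc_self
        exact continuousOn_const.mul (fun u hu => (Real.continuousAt_rpow_const u _
          (Or.inl (ne_of_gt (lt_of_lt_of_le ht.1 hu.1)))).continuousWithinAt)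
      have h2 : ∫⁻ u in Ioo t 1, g u = ENNReal.ofReal (∫ u in Ioo t 1, -q * u ^ (q - 1)) := by
        rw [← ofReal_integral_eq_lintegral_ofReal hint ((ae_restrict_iff' measurableSet_Ioo).2
          (ae_of_all _ fun u hu => mul_nonneg (by linarith)
            (Real.rpow_nonneg (le_of_lt (lt_trans ht.1 hu.1)) _)))]
      have h3 : ∫ u in Ioo t 1, -q * u ^ (q - 1) = t ^ q - 1 := by
        rw [← integral_Ioc_eq_integral_Ioo, ← intervalIntegral.integral_of_le ht.2.le,
          intervalIntegral.integral_const_mul, integral_rpow (Or.inr ⟨by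
            intro hc; exact hqne (by linarith [sub_eq_iff_eq_add.mp hc]), by
            rw [Set.uIcc_of_le ht.2.le]; intro hc; exact absurd hc.1 (not_le.2 ht.1)⟩)]
        rw [sub_add_cancel, Real.one_rpow]
        field_simp
        ring
      rw [h1, h2, h3]
      have hge1 : 1 ≤ t ^ q :=
        Real.one_le_rpow_of_pos_of_le_one_of_nonpos ht.1 ht.2.le hq0.le
      rw [← ENNReal.ofReal_one, ← ENNReal.ofReal_add zero_le_one (by linarith)]
      norm_num
    -- integrate against μ and swap
    have hΦ : ∫⁻ t, ENNReal.ofReal (t ^ q) ∂μ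
        = μ univ + ∫⁻ u in Ioo (0 : ℝ) 1, g u * μ (Iio u) := by
      have e1 : ∫⁻ t, ENNReal.ofReal (t ^ q) ∂μ
          = ∫⁻ t, (1 + ∫⁻ u in Ioo (0 : ℝ) 1, (Ioo t 1).indicator g u) ∂μ :=
        lintegral_congr_ae (hμsupp.mono fun t ht => hpt t ht)
      rw [e1, lintegral_add_left measurable_const, lintegral_const, one_mul]
      congr 1
      have huncurry : (Function.uncurry fun (t u : ℝ) => (Ioo t 1).indicator g u)
          = fun z : ℝ × ℝ => ({z : ℝ × ℝ | z.1 < z.2 ∧ z.2 < 1}).indicator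
              (fun z => g z.2) z := by
        funext z
        simp only [Function.uncurry, Set.indicator, Set.mem_Ioo, Set.mem_setOf_eq]
      have hswap : ∫⁻ t, ∫⁻ u in Ioo (0 : ℝ) 1, (Ioo t 1).indicator g u ∂(volume) ∂μ
          = ∫⁻ u in Ioo (0 : ℝ) 1, ∫⁻ t, (Ioo t 1).indicator g u ∂μ ∂(volume) := by
        apply lintegral_lintegral_swap
        rw [huncurry]
        exact ((hgmeas.comp measurable_snd).indicator
          ((measurableSet_lt measurable_fst measurable_snd).inter
            (measurable_snd measurableSet_Iio))).aemeasurable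
      rw [hswap]
      refine setLIntegral_congr_fun measurableSet_Ioo (fun u hu => ?_)
      have hind : ∀ t : ℝ, (Ioo t 1).indicator g u
          = (Iio u).indicator (fun _ => g u) t := by
        intro t
        simp only [Set.indicator, Set.mem_Ioo, Set.mem_Iio]
        by_cases h : t < u
        · simp [h, hu.2]
        · simp [h]
      rw [lintegral_congr hind, lintegral_indicator_const measurableSet_Iio]
    -- finiteness of the layer-cake integral
    have hbd : ∀ u ∈ Ioo (0 : ℝ) 1,
        g u * μ (Iio u) ≤ ENNReal.ofReal ((-q * M) * u ^ (q - 1 - p)) := by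
      intro u hu
      have hFru : Fr u ≤ M * u ^ (-p) := by
        have h2 := hM u hu
        have h3 : (0 : ℝ) < u ^ (-p) := Real.rpow_pos_of_pos hu.1 _
        have h4 : u ^ (-p) * (u ^ p * Fr u) ≤ u ^ (-p) * M :=
          mul_le_mul_of_nonneg_left h2 h3.le
        rw [← mul_assoc, ← Real.rpow_add hu.1, neg_add_cancel, Real.rpow_zero, one_mul] at h4
        linarith
      have hgnn : (0 : ℝ) ≤ -q * u ^ (q - 1) :=
        mul_nonneg (by linarith) (Real.rpow_nonneg hu.1.le _)
      rw [hgdef, ← ENNReal.ofReal_toReal (hFrfin u), ← ENNReal.ofReal_mul hgnn]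
      apply ENNReal.ofReal_le_ofReal
      calc -q * u ^ (q - 1) * Fr u ≤ -q * u ^ (q - 1) * (M * u ^ (-p)) := by
            apply mul_le_mul_of_nonneg_left hFru hgnn
        _ = (-q * M) * u ^ (q - 1 - p) := by
            rw [show q - 1 - p = (q - 1) + -p by ring, Real.rpow_add hu.1]
            ring
    have hJfin : (∫⁻ u in Ioo (0 : ℝ) 1, g u * μ (Iio u)) ≠ ⊤ := by
      have hint : IntegrableOn (fun u : ℝ => (-q * M) * u ^ (q - 1 - p)) (Ioo (0 : ℝ) 1) :=
        ((intervalIntegral.integrableOn_Ioo_rpow_iff zero_lt_one).2 (by linarith)).const_mul _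
      have hle : (∫⁻ u in Ioo (0 : ℝ) 1, g u * μ (Iio u))
          ≤ ∫⁻ u in Ioo (0 : ℝ) 1, (‖(-q * M) * u ^ (q - 1 - p)‖₊ : ℝ≥0∞) := by
        apply lintegral_mono_ae
        refine (ae_restrict_iff' measurableSet_Ioo).2 (ae_of_all _ fun u hu => ?_)
        exact le_trans (hbd u hu) (Real.ofReal_le_enorm _)
      exact (lt_of_le_of_lt hle hint.2).ne
    -- pass to λ
    have hΦlam : ∫⁻ t, ENNReal.ofReal (t ^ q) ∂μ
        = ∫⁻ x, ENNReal.ofReal (f x * ρ x ^ q) ∂lam := by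
      have hm1 : Measurable fun t : ℝ => ENNReal.ofReal (t ^ q) :=
        ENNReal.measurable_ofReal.comp (measurable_id.pow measurable_const)
      have hm2 : Measurable fun x : X => ENNReal.ofReal (f x) :=
        ENNReal.measurable_ofReal.comp hf
      have hm3 : Measurable fun x : X => ENNReal.ofReal (ρ x ^ q) :=
        ENNReal.measurable_ofReal.comp (hρ.pow measurable_const)
      rw [hμdef, lintegral_map hm1 hρ, hνdef,
        lintegral_withDensity_eq_lintegral_mul _ hm2 hm3]
      congr 1
      funext x
      simp only [Pi.mul_apply]
      rw [← ENNReal.ofReal_mul (hf0 x)]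
    -- convert to real integrals
    have e4 : ∫ x, f x * ρ x ^ q ∂lam
        = (∫⁻ x, ENNReal.ofReal (f x * ρ x ^ q) ∂lam).toReal :=
      integral_eq_lintegral_of_nonneg_ae (ae_of_all _ fun x =>
        mul_nonneg (hf0 x) (Real.rpow_nonneg (hρ01 x).1.le _))
        (hf.mul (hρ.pow measurable_const)).aestronglyMeasurable
    have e6 : ∫⁻ u in Ioo (0 : ℝ) 1, g u * μ (Iio u)
        = ∫⁻ u in Ioo (0 : ℝ) 1, ENNReal.ofReal (-q * u ^ (q - 1) * Fr u) :=
      setLIntegral_congr_fun measurableSet_Ioo (fun u hu => by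
        simp only [hgdef, hFrdef]
        rw [ENNReal.ofReal_mul (mul_nonneg (by linarith) (Real.rpow_nonneg hu.1.le _)),
          ENNReal.ofReal_toReal (hFrfin u)])
    have e5 : ∫ u in Ioo (0 : ℝ) 1, -q * (u ^ (q - 1) * Fr u)
        = (∫⁻ u in Ioo (0 : ℝ) 1, g u * μ (Iio u)).toReal := by
      rw [e6, integral_eq_lintegral_of_nonneg_ae ((ae_restrict_iff' measurableSet_Ioo).2
        (ae_of_all _ fun u hu => mul_nonneg (by linarith)
          (mul_nonneg (Real.rpow_nonneg hu.1.le _) (hFr0 u))))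
        ((measurable_const.mul ((measurable_id.pow measurable_const).mul
          hFrmeas)).aestronglyMeasurable)]
      congr 1
      refine setLIntegral_congr_fun measurableSet_Ioo (fun u hu => ?_)
      rw [mul_assoc]
    rw [e4, ← hΦlam, hΦ, ENNReal.toReal_add hμuniv hJfin]
    congr 1
    rw [← e5, MeasureTheory.integral_const_mul]
  -- change of variables u = t^(1/δ)
  have hsub : ∀ δ : ℝ, δ ∈ Ioo (0 : ℝ) (-p) →
      δ * ∫ u in Ioo (0 : ℝ) 1, u ^ (p + δ - 1) * Fr u
        = ∫ t in Ioo (0 : ℝ) 1, (t ^ (1/δ)) ^ p * Fr (t ^ (1/δ)) := by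
    intro δ hδ
    have hδ0 : 0 < δ := hδ.1
    have hδne : δ ≠ 0 := hδ0.ne'
    have hc0 : 0 < 1/δ := by positivity
    have himg : (fun t : ℝ => t ^ (1/δ)) '' Ioo 0 1 = Ioo (0 : ℝ) 1 := by
      ext u
      constructor
      · rintro ⟨t, ht, rfl⟩
        exact ⟨Real.rpow_pos_of_pos ht.1 _, Real.rpow_lt_one ht.1.le ht.2 hc0⟩
      · intro hu
        refine ⟨u ^ δ, ⟨Real.rpow_pos_of_pos hu.1 _, Real.rpow_lt_one hu.1.le hu.2 hδ0⟩, ?_⟩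
        show (u ^ δ) ^ (1/δ) = u
        rw [← Real.rpow_mul hu.1.le, mul_one_div_cancel hδne, Real.rpow_one]
    have hderiv : ∀ t ∈ Ioo (0 : ℝ) 1, HasDerivWithinAt (fun t : ℝ => t ^ (1/δ))
        ((fun t : ℝ => (1/δ) * t ^ (1/δ - 1)) t) (Ioo (0 : ℝ) 1) t := fun t ht =>
      (Real.hasDerivAt_rpow_const (Or.inl ht.1.ne')).hasDerivWithinAt
    have hinj : InjOn (fun t : ℝ => t ^ (1/δ)) (Ioo (0 : ℝ) 1) := by
      have hsm : StrictMonoOn (fun t : ℝ => t ^ (1/δ)) (Ioo (0 : ℝ) 1) := fun x hx y hy hxy =>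
        Real.rpow_lt_rpow hx.1.le hxy hc0
      exact hsm.injOn
    have himage := integral_image_eq_integral_abs_deriv_smul measurableSet_Ioo hderiv hinj
      (fun u => δ * (u ^ (p + δ - 1) * Fr u))
    rw [himg] at himage
    rw [← MeasureTheory.integral_const_mul δ, himage]
    refine setIntegral_congr_fun measurableSet_Ioo (fun t ht => ?_)
    have ht0 : (0 : ℝ) < t := ht.1
    have h1 : (t ^ (1/δ)) ^ (p + δ - 1) = t ^ ((1/δ) * (p + δ - 1)) :=
      (Real.rpow_mul ht0.le _ _).symm
    have h2 : (t ^ (1/δ)) ^ p = t ^ ((1/δ) * p) := (Real.rpow_mul ht0.le _ _).symm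
    simp only [smul_eq_mul]
    rw [h1, h2, abs_of_pos (by positivity : (0:ℝ) < 1/δ * t ^ (1/δ - 1))]
    rw [show 1/δ * t ^ (1/δ - 1) * (δ * (t ^ ((1/δ) * (p + δ - 1)) * Fr (t ^ (1/δ))))
        = (t ^ (1/δ - 1) * t ^ ((1/δ) * (p + δ - 1))) * Fr (t ^ (1/δ)) by
      field_simp]
    rw [← Real.rpow_add ht0]
    have hexp : 1/δ - 1 + 1/δ * (p + δ - 1) = 1/δ * p := by field_simp; ring
    rw [hexp]
  -- dominated convergence
  have hDCT : Tendsto (fun δ : ℝ => ∫ t in Ioo (0 : ℝ) 1, (t ^ (1/δ)) ^ p * Fr (t ^ (1/δ)))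
      (𝓝[Ioo (0 : ℝ) (-p)] 0) (𝓝 L) := by
    have hmeas : ∀ᶠ δ : ℝ in 𝓝[Ioo (0 : ℝ) (-p)] 0, AEStronglyMeasurable
        (fun t : ℝ => (t ^ (1/δ)) ^ p * Fr (t ^ (1/δ))) (volume.restrict (Ioo (0 : ℝ) 1)) :=
      Eventually.of_forall fun δ =>
        (((measurable_id.pow measurable_const).pow measurable_const).mul
          (hFrmeas.comp (measurable_id.pow measurable_const))).aestronglyMeasurable
    have hbound : ∀ᶠ δ : ℝ in 𝓝[Ioo (0 : ℝ) (-p)] 0, ∀ᵐ t ∂(volume.restrict (Ioo (0 : ℝ) 1)),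
        ‖(t ^ (1/δ)) ^ p * Fr (t ^ (1/δ))‖ ≤ M := by
      filter_upwards [self_mem_nhdsWithin] with δ hδ
      refine (ae_restrict_iff' measurableSet_Ioo).2 (ae_of_all _ fun t ht => ?_)
      have hc0 : 0 < 1/δ := by have := hδ.1; positivity
      have hu : t ^ (1/δ) ∈ Ioo (0 : ℝ) 1 :=
        ⟨Real.rpow_pos_of_pos ht.1 _, Real.rpow_lt_one ht.1.le ht.2 hc0⟩
      rw [Real.norm_eq_abs, abs_of_nonneg (mul_nonneg (Real.rpow_nonneg hu.1.le _) (hFr0 _))]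
      exact hM _ hu
    have hbint : Integrable (fun _ : ℝ => M) (volume.restrict (Ioo (0 : ℝ) 1)) := by
      refine integrableOn_const ?_
      simp
    have hlimpt : ∀ᵐ t ∂(volume.restrict (Ioo (0 : ℝ) 1)),
        Tendsto (fun δ : ℝ => (t ^ (1/δ)) ^ p * Fr (t ^ (1/δ)))
          (𝓝[Ioo (0 : ℝ) (-p)] 0) (𝓝 L) := by
      refine (ae_restrict_iff' measurableSet_Ioo).2 (ae_of_all _ fun t ht => ?_)
      have h1 : Tendsto (fun δ : ℝ => t ^ (1/δ)) (𝓝[Ioo (0 : ℝ) (-p)] 0) (𝓝[>] (0 : ℝ)) := by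
        rw [tendsto_nhdsWithin_iff]
        constructor
        · have hlog : Real.log t < 0 := Real.log_neg ht.1 ht.2
          have h2 : Tendsto (fun δ : ℝ => 1/δ) (𝓝[Ioo (0 : ℝ) (-p)] 0) atTop := by
            rw [show (fun δ : ℝ => 1/δ) = fun δ : ℝ => δ⁻¹ by funext δ; rw [one_div]]
            exact tendsto_inv_nhdsGT_zero.mono_left (nhdsWithin_mono _ fun x hx => hx.1)
          have h3 : Tendsto (fun δ : ℝ => Real.log t * (1/δ)) (𝓝[Ioo (0 : ℝ) (-p)] 0) atBot :=
            (tendsto_const_mul_atBot_of_neg hlog).2 h2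
          have h4 := Real.tendsto_exp_atBot.comp h3
          exact h4.congr fun δ => (Real.rpow_def_of_pos ht.1 _).symm
        · exact Eventually.of_forall fun δ => Real.rpow_pos_of_pos ht.1 _
      exact hlimG.comp h1
    have := tendsto_integral_filter_of_dominated_convergence (μ := volume.restrict (Ioo (0:ℝ) 1))
      (F := fun (δ : ℝ) (t : ℝ) => (t ^ (1/δ)) ^ p * Fr (t ^ (1/δ))) (f := fun _ => L)
      (fun _ => M) hmeas hbound hbint hlimpt
    have hLlim : (∫ _ in Ioo (0 : ℝ) 1, L) = L := by simp
    rwa [hLlim] at this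
  -- assembly
  have heq : ∀ᶠ δ in 𝓝[Ioo (0 : ℝ) (-p)] (0 : ℝ),
      δ * (μ univ).toReal
        + (-(p + δ)) * ∫ t in Ioo (0 : ℝ) 1, (t ^ (1/δ)) ^ p * Fr (t ^ (1/δ))
        = δ * ∫ x, f x * ρ x ^ (p + δ) ∂lam := by
    filter_upwards [self_mem_nhdsWithin] with δ hδ
    rw [key (p + δ) (by linarith [hδ.1]) (by linarith [hδ.2]), ← hsub δ hδ]
    ring
  have hδ0 : Tendsto (fun δ : ℝ => δ) (𝓝[Ioo (0 : ℝ) (-p)] 0) (𝓝 0) :=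
    tendsto_id.mono_left nhdsWithin_le_nhds
  have hmain : Tendsto (fun δ : ℝ => δ * (μ univ).toReal
      + (-(p + δ)) * ∫ t in Ioo (0 : ℝ) 1, (t ^ (1/δ)) ^ p * Fr (t ^ (1/δ)))
      (𝓝[Ioo (0 : ℝ) (-p)] 0) (𝓝 (0 * (μ univ).toReal + (-(p + 0)) * L)) :=
    (hδ0.mul_const _).add (((hδ0.const_add p).neg).mul hDCT)
  have hval : (0 : ℝ) * (μ univ).toReal + (-(p + 0)) * L = -p * L := by ring
  rw [hval] at hmain
  exact hmain.congr' heq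
end

section
/- Define, for z ≠ w in the open upper half-plane H, the kernel G(z,w) = −log|z−w| − log|z−w̄| + 2·log|z|·1_{|z|≥1} + 2·log|w|·1_{|w|≥1}. Then for every β̃ ∈ (0, 1/2) and every compact set K ⊂ closure(H), sup over δ ∈ (0,1) of ∬_{(K∩H)×(K∩H)} e^{β̃·G(z,w)} · δ·(2·Im z)^{δ−1} · δ·(2·Im w)^{δ−1} dz dw is finite, where dz, dw denote two-dimensional Lebesgue measure. -/
open MeasureTheory Filter Topology Set
open scoped ENNReal

/-- The covariance kernel of the free-boundary GFF on the upper half-plane,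
normalized to have zero average on the upper unit semicircle:
`G(z,w) = −log|z−w| − log|z−w̄| + 2·log|z|·1_{|z|≥1} + 2·log|w|·1_{|w|≥1}`. -/
noncomputable def freeGFFKernel (z w : ℂ) : ℝ :=
  -Real.log (‖z - w‖) - Real.log (‖z - (starRingEnd ℂ) w‖)
    + 2 * Real.log (‖z‖) * (if 1 ≤ ‖z‖ then 1 else 0)
    + 2 * Real.log (‖w‖) * (if 1 ≤ ‖w‖ then 1 else 0)

section EnergyAux

lemma rect_lintegral (F1 F2 : ℝ → ℝ≥0∞) (hF1 : Measurable F1) (hF2 : Measurable F2)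
    (s t : Set ℝ) :
    ∫⁻ z in Complex.measurableEquivRealProd ⁻¹' (s ×ˢ t), F1 z.re * F2 z.im =
      (∫⁻ x in s, F1 x) * ∫⁻ y in t, F2 y := by
  have h := Complex.volume_preserving_equiv_real_prod.setLIntegral_comp_preimage_emb
      Complex.measurableEquivRealProd.measurableEmbedding
      (fun p : ℝ × ℝ => F1 p.1 * F2 p.2) (s ×ˢ t)
  simp only [Complex.measurableEquivRealProd_apply] at h
  rw [h, Measure.volume_eq_prod, ← Measure.prod_restrict]
  exact lintegral_prod_mul hF1.aemeasurable hF2.aemeasurable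

lemma null_re (c : ℝ) : (volume : Measure ℂ) {w : ℂ | w.re = c} = 0 := by
  have h : {w : ℂ | w.re = c} = Complex.measurableEquivRealProd ⁻¹' ({c} ×ˢ (univ : Set ℝ)) := by
    ext z; simp [eq_comm]
  rw [h, Complex.volume_preserving_equiv_real_prod.measure_preimage
    ((measurableSet_singleton c).prod MeasurableSet.univ).nullMeasurableSet,
    Measure.volume_eq_prod, Measure.prod_prod]
  simp

lemma abs_rpow_integrable (p a : ℝ) (hp : p < 1) (ha : 0 ≤ a) :
    IntegrableOn (fun s : ℝ => |s| ^ (-p)) (Icc (-a) a) volume := by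
  have h1 : IntegrableOn (fun s : ℝ => |s| ^ (-p)) (Ioc 0 a) volume := by
    have := (intervalIntegral.intervalIntegrable_rpow' (a := 0) (b := a) (r := -p) (by linarith))
    rw [intervalIntegrable_iff, uIoc_of_le ha] at this
    refine this.congr_fun (fun x hx => ?_) measurableSet_Ioc
    rw [abs_of_pos hx.1]
  have h2 : IntegrableOn (fun s : ℝ => |s| ^ (-p)) (Ioc (-a) 0) volume := by
    have hii : IntervalIntegrable (fun s : ℝ => |s| ^ (-p)) volume (-a) 0 := by
      rw [IntervalIntegrable.iff_comp_neg]
      simp only [abs_neg, neg_neg, neg_zero]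
      rw [intervalIntegrable_iff, uIoc_comm, uIoc_of_le ha]
      exact h1
    rw [intervalIntegrable_iff, uIoc_of_le (by linarith)] at hii
    exact hii
  have hsub : Icc (-a) a ⊆ Ioc (-a) 0 ∪ Ioc 0 a ∪ {-a} := by
    intro x hx
    rcases le_or_gt x 0 with h | h
    · rcases eq_or_lt_of_le hx.1 with h' | h'
      · exact Or.inr (by simp [← h'])
      · exact Or.inl (Or.inl ⟨h', h⟩)
    · exact Or.inl (Or.inr ⟨h, hx.2⟩)
  refine IntegrableOn.mono_set ?_ hsub
  refine ((h2.union h1).union ?_)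
  have : IntegrableOn (fun s : ℝ => |s| ^ (-p)) ({-a} : Set ℝ) volume :=
    (integrableOn_singleton_iff).mpr (Or.inr (by simp))
  exact this

lemma abs_rpow_lintegral_lt_top (p a : ℝ) (hp : p < 1) (ha : 0 ≤ a) :
    ∫⁻ s in Icc (-a) a, ENNReal.ofReal (|s| ^ (-p)) < ⊤ := by
  have h := (abs_rpow_integrable p a hp ha).2
  refine lt_of_le_of_lt (lintegral_mono fun x => ?_) h
  exact Real.ofReal_le_enorm _

lemma y_lintegral_le (δ R : ℝ) (hδ : δ ∈ Set.Ioo (0:ℝ) 1) (hR : 1 ≤ R) :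
    ∫⁻ v in Ioc (0:ℝ) R, ENNReal.ofReal (δ * (2*v) ^ (δ-1)) ≤ ENNReal.ofReal R := by
  obtain ⟨hδ0, hδ1⟩ := hδ
  have hR0 : (0:ℝ) ≤ R := by linarith
  have hcongr : EqOn (fun v : ℝ => δ * (2*v) ^ (δ-1))
      (fun v : ℝ => (δ * 2 ^ (δ-1)) * v ^ (δ-1)) (Ioc 0 R) := by
    intro v hv
    simp only
    rw [Real.mul_rpow (by norm_num) hv.1.le]
    ring
  have hint0 : IntegrableOn (fun v : ℝ => (δ * 2 ^ (δ-1)) * v ^ (δ-1)) (Ioc 0 R) volume := by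
    have := (intervalIntegral.intervalIntegrable_rpow' (a := 0) (b := R) (r := δ-1) (by linarith))
    rw [intervalIntegrable_iff, uIoc_of_le hR0] at this
    exact this.const_mul _
  have hint : IntegrableOn (fun v : ℝ => δ * (2*v) ^ (δ-1)) (Ioc 0 R) volume :=
    hint0.congr_fun (fun x hx => (hcongr hx).symm) measurableSet_Ioc
  have hnn : 0 ≤ᵐ[volume.restrict (Ioc (0:ℝ) R)] fun v : ℝ => δ * (2*v) ^ (δ-1) := by
    filter_upwards [ae_restrict_mem measurableSet_Ioc] with v hv
    exact mul_nonneg hδ0.le (Real.rpow_nonneg (by linarith [hv.1]) _)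
  rw [← ofReal_integral_eq_lintegral_ofReal hint hnn]
  apply ENNReal.ofReal_le_ofReal
  have hval : ∫ v in Ioc (0:ℝ) R, δ * (2*v) ^ (δ-1) = δ * 2 ^ (δ-1) * (R ^ δ / δ) := by
    rw [setIntegral_congr_fun measurableSet_Ioc hcongr]
    rw [← intervalIntegral.integral_of_le hR0, intervalIntegral.integral_const_mul,
      integral_rpow (Or.inl (by linarith))]
    rw [Real.zero_rpow (by linarith), sub_add_cancel]
    ring_nf
  rw [hval]
  have h1 : δ * 2 ^ (δ-1) * (R ^ δ / δ) = 2 ^ (δ-1) * R ^ δ := by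
    field_simp
  rw [h1]
  have hRd : R ^ δ ≤ R := by
    calc R ^ δ ≤ R ^ (1:ℝ) := Real.rpow_le_rpow_of_exponent_le hR hδ1.le
      _ = R := Real.rpow_one R
  have h2d : (2:ℝ) ^ (δ-1) ≤ 1 :=
    Real.rpow_le_one_of_one_le_of_nonpos (by norm_num) (by linarith)
  calc (2:ℝ) ^ (δ-1) * R ^ δ ≤ 1 * R := by
        apply mul_le_mul h2d hRd (Real.rpow_nonneg (by linarith) _) (by norm_num)
    _ = R := one_mul R

lemma exp_kernel_bound (βt R : ℝ) (hβ0 : 0 < βt) (hR : 1 ≤ R) (z w : ℂ)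
    (hz : ‖z‖ ≤ R) (hw : ‖w‖ ≤ R) (hne : z.re ≠ w.re) :
    Real.exp (βt * freeGFFKernel z w) ≤ R ^ (4*βt) * |z.re - w.re| ^ (-(2*βt)) := by
  set t := |z.re - w.re| with hts
  have ht : 0 < t := abs_pos.mpr (sub_ne_zero.mpr hne)
  have hR0 : (0:ℝ) < R := by linarith
  have h1 : t ≤ ‖z - w‖ := by
    have := Complex.abs_re_le_norm (z - w)
    rwa [Complex.sub_re] at this
  have h2 : t ≤ ‖z - (starRingEnd ℂ) w‖ := by
    have := Complex.abs_re_le_norm (z - (starRingEnd ℂ) w)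
    rwa [Complex.sub_re, Complex.conj_re] at this
  have hlog1 : Real.log t ≤ Real.log (‖z - w‖) := Real.log_le_log ht h1
  have hlog2 : Real.log t ≤ Real.log (‖z - (starRingEnd ℂ) w‖) :=
    Real.log_le_log ht h2
  have hlogR : 0 ≤ Real.log R := Real.log_nonneg hR
  have hc : ∀ u : ℂ, ‖u‖ ≤ R →
      2 * Real.log (‖u‖) * (if 1 ≤ ‖u‖ then 1 else 0) ≤ 2 * Real.log R := by
    intro u hu
    split_ifs with h
    · rw [mul_one]
      have : Real.log (‖u‖) ≤ Real.log R := Real.log_le_log (by linarith) hu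
      linarith
    · rw [mul_zero]; linarith
  have hG : freeGFFKernel z w ≤ -Real.log t - Real.log t + 2 * Real.log R + 2 * Real.log R := by
    unfold freeGFFKernel
    have := hc z hz
    have := hc w hw
    linarith
  have hmul : βt * freeGFFKernel z w ≤ (4*βt) * Real.log R + (-(2*βt)) * Real.log t := by
    have := mul_le_mul_of_nonneg_left hG hβ0.le
    nlinarith [this]
  calc Real.exp (βt * freeGFFKernel z w)
      ≤ Real.exp ((4*βt) * Real.log R + (-(2*βt)) * Real.log t) := Real.exp_le_exp.mpr hmul
    _ = R ^ (4*βt) * t ^ (-(2*βt)) := by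
        rw [Real.exp_add, Real.rpow_def_of_pos hR0, Real.rpow_def_of_pos ht]
        ring_nf

end EnergyAux

/-- For every `β̃ ∈ (0, 1/2)` and every compact `K` contained in the closed
upper half-plane, the energies of the approximate boundary Lebesgue measures
`L^δ_ℝ(dz) = δ·(2·Im z)^{δ−1} dz` against the kernel `e^{β̃·G}` are bounded uniformly
over `δ ∈ (0,1)`. -/
theorem energy_condition_boundary_lebesgue (βt : ℝ) (hβ : βt ∈ Set.Ioo (0 : ℝ) (1 / 2))
    (K : Set ℂ) (hK : IsCompact K) (hK' : K ⊆ {z : ℂ | 0 ≤ z.im}) :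
    (⨆ δ ∈ Set.Ioo (0 : ℝ) 1,
      ∫⁻ z in K ∩ {z : ℂ | 0 < z.im}, ∫⁻ w in K ∩ {w : ℂ | 0 < w.im},
        ENNReal.ofReal (Real.exp (βt * freeGFFKernel z w)
          * (δ * (2 * z.im) ^ (δ - 1)) * (δ * (2 * w.im) ^ (δ - 1)))) < ⊤ := by
  obtain ⟨hβ0, hβ2⟩ := hβ
  obtain ⟨R₀, hR₀⟩ := hK.isBounded.subset_closedBall 0
  set R : ℝ := max R₀ 1 with hRdef
  have hR1 : (1:ℝ) ≤ R := le_max_right _ _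
  have hR0 : (0:ℝ) < R := by linarith
  set A : Set ℂ := K ∩ {z : ℂ | 0 < z.im} with hAdef
  have hAmeas : MeasurableSet A :=
    hK.isClosed.measurableSet.inter (isOpen_lt continuous_const Complex.continuous_im).measurableSet
  have hKR : ∀ z ∈ A, ‖z‖ ≤ R := by
    intro z hz
    have := hR₀ hz.1
    rw [Metric.mem_closedBall, Complex.dist_eq, sub_zero] at this
    exact this.trans (le_max_left _ _)
  set rect : Set ℂ := Complex.measurableEquivRealProd ⁻¹' ((Icc (-R) R) ×ˢ (Ioc 0 R)) with hrectdef
  have hsubrect : A ⊆ rect := by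
    intro z hz
    have habs := hKR z hz
    have h1 := abs_le.mp ((Complex.abs_re_le_norm z).trans habs)
    have h2 : z.im ≤ R := le_trans (le_trans (le_abs_self _) (Complex.abs_im_le_norm z)) habs
    simp only [hrectdef, mem_preimage, Complex.measurableEquivRealProd_apply, mem_prod,
      mem_Icc, mem_Ioc]
    exact ⟨⟨h1.1, h1.2⟩, hz.2, h2⟩
  set C1 : ℝ≥0∞ := ∫⁻ s in Icc (-(2*R)) (2*R), ENNReal.ofReal (|s| ^ (-(2*βt))) with hC1def
  have hC1 : C1 < ⊤ := abs_rpow_lintegral_lt_top (2*βt) (2*R) (by linarith) (by linarith)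
  set M : ℝ≥0∞ := ENNReal.ofReal (R ^ (4*βt)) * (C1 * ENNReal.ofReal R) with hMdef
  have hMne : M ≠ ⊤ :=
    ENNReal.mul_ne_top ENNReal.ofReal_ne_top (ENNReal.mul_ne_top hC1.ne ENNReal.ofReal_ne_top)
  set B : ℝ≥0∞ := M * (ENNReal.ofReal (2*R) * ENNReal.ofReal R) with hBdef
  have hB : B < ⊤ := by
    rw [hBdef]
    exact ENNReal.mul_lt_top hMne.lt_top
      (ENNReal.mul_lt_top ENNReal.ofReal_lt_top ENNReal.ofReal_lt_top)
  refine lt_of_le_of_lt (iSup₂_le fun δ hδ => ?_) hB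
  obtain ⟨hδ0, hδ1⟩ := hδ
  set F2 : ℝ → ℝ≥0∞ := fun v => ENNReal.ofReal (δ * (2*v) ^ (δ-1)) with hF2def
  have hF2m : Measurable F2 :=
    ENNReal.measurable_ofReal.comp
      (measurable_const.mul ((measurable_const_mul 2).pow_const (δ-1)))
  -- inner bound
  have hinner : ∀ z ∈ A,
      ∫⁻ w in A, ENNReal.ofReal (Real.exp (βt * freeGFFKernel z w) * (δ * (2*w.im) ^ (δ-1))) ≤ M := by
    intro z hz
    set F1 : ℝ → ℝ≥0∞ := fun u => ENNReal.ofReal (|z.re - u| ^ (-(2*βt))) with hF1def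
    have hF1m : Measurable F1 :=
      ENNReal.measurable_ofReal.comp
        (((measurable_const.sub measurable_id).abs).pow_const (-(2*βt)))
    have hnull : (volume.restrict A) {w : ℂ | w.re = z.re} = 0 :=
      le_antisymm (le_trans (Measure.restrict_le_self _) (null_re z.re).le) zero_le
    have hae2 : ∀ᵐ w ∂(volume.restrict A), w.re ≠ z.re := by
      rw [ae_iff]
      simpa using hnull
    calc ∫⁻ w in A, ENNReal.ofReal (Real.exp (βt * freeGFFKernel z w) * (δ * (2*w.im) ^ (δ-1)))
        ≤ ∫⁻ w in A, ENNReal.ofReal (R ^ (4*βt)) * (F1 w.re * F2 w.im) := by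
          apply lintegral_mono_ae
          filter_upwards [ae_restrict_mem hAmeas, hae2] with w hwA hwne
          have hbd := exp_kernel_bound βt R hβ0 hR1 z w (hKR z hz) (hKR w hwA)
            (fun h => hwne h.symm)
          have hgw : 0 ≤ δ * (2*w.im) ^ (δ-1) :=
            mul_nonneg hδ0.le (Real.rpow_nonneg (by have h := hwA.2; simp only [Set.mem_setOf_eq] at h; linarith) _)
          calc ENNReal.ofReal (Real.exp (βt * freeGFFKernel z w) * (δ * (2*w.im) ^ (δ-1)))
              ≤ ENNReal.ofReal ((R ^ (4*βt) * |z.re - w.re| ^ (-(2*βt))) * (δ * (2*w.im) ^ (δ-1))) :=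
                ENNReal.ofReal_le_ofReal (mul_le_mul_of_nonneg_right hbd hgw)
            _ = ENNReal.ofReal (R ^ (4*βt)) * (F1 w.re * F2 w.im) := by
                rw [mul_assoc, ENNReal.ofReal_mul (Real.rpow_nonneg hR0.le _),
                  ENNReal.ofReal_mul (Real.rpow_nonneg (abs_nonneg _) _)]
      _ = ENNReal.ofReal (R ^ (4*βt)) * ∫⁻ w in A, F1 w.re * F2 w.im :=
          lintegral_const_mul' _ _ ENNReal.ofReal_ne_top
      _ ≤ ENNReal.ofReal (R ^ (4*βt)) * ∫⁻ w in rect, F1 w.re * F2 w.im := by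
          apply mul_le_mul_right
          exact lintegral_mono' (Measure.restrict_mono hsubrect le_rfl) le_rfl
      _ = ENNReal.ofReal (R ^ (4*βt)) * ((∫⁻ u in Icc (-R) R, F1 u) * ∫⁻ v in Ioc 0 R, F2 v) := by
          rw [rect_lintegral F1 F2 hF1m hF2m]
      _ ≤ M := by
          rw [hMdef]
          apply mul_le_mul_right
          apply mul_le_mul'
          · -- translation bound
            have hzre := abs_le.mp ((Complex.abs_re_le_norm z).trans (hKR z hz))
            have hpre : Icc (-R) R ⊆ (fun u : ℝ => z.re - u) ⁻¹' Icc (-(2*R)) (2*R) := by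
              intro u hu
              simp only [mem_preimage, mem_Icc] at *
              constructor <;> linarith [hu.1, hu.2, hzre.1, hzre.2]
            calc ∫⁻ u in Icc (-R) R, F1 u
                ≤ ∫⁻ u in (fun u : ℝ => z.re - u) ⁻¹' Icc (-(2*R)) (2*R), F1 u :=
                  lintegral_mono' (Measure.restrict_mono hpre le_rfl) le_rfl
              _ = C1 := by
                  rw [hC1def]
                  exact (Measure.measurePreserving_sub_left (volume : Measure ℝ) z.re).setLIntegral_comp_preimage_emb
                    (MeasurableEquiv.subLeft z.re).measurableEmbedding
                    (fun s : ℝ => ENNReal.ofReal (|s| ^ (-(2*βt)))) (Icc (-(2*R)) (2*R))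
          · exact y_lintegral_le δ R ⟨hδ0, hδ1⟩ hR1
  -- outer bound
  calc ∫⁻ z in A, ∫⁻ w in A,
        ENNReal.ofReal (Real.exp (βt * freeGFFKernel z w)
          * (δ * (2 * z.im) ^ (δ - 1)) * (δ * (2 * w.im) ^ (δ - 1)))
      ≤ ∫⁻ z in A, F2 z.im * M := by
        apply setLIntegral_mono' hAmeas
        intro z hz
        have hgz : 0 ≤ δ * (2*z.im) ^ (δ-1) :=
          mul_nonneg hδ0.le (Real.rpow_nonneg (by have h := hz.2; simp only [Set.mem_setOf_eq] at h; linarith) _)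
        calc ∫⁻ w in A, ENNReal.ofReal (Real.exp (βt * freeGFFKernel z w)
              * (δ * (2 * z.im) ^ (δ - 1)) * (δ * (2 * w.im) ^ (δ - 1)))
            = ∫⁻ w in A, ENNReal.ofReal (δ * (2 * z.im) ^ (δ - 1))
                * ENNReal.ofReal (Real.exp (βt * freeGFFKernel z w) * (δ * (2 * w.im) ^ (δ - 1))) := by
              apply lintegral_congr
              intro w
              rw [← ENNReal.ofReal_mul hgz]
              ring_nf
          _ = ENNReal.ofReal (δ * (2 * z.im) ^ (δ - 1))
                * ∫⁻ w in A, ENNReal.ofReal (Real.exp (βt * freeGFFKernel z w)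
                    * (δ * (2 * w.im) ^ (δ - 1))) :=
              lintegral_const_mul' _ _ ENNReal.ofReal_ne_top
          _ ≤ F2 z.im * M := mul_le_mul_right (hinner z hz) _
    _ = (∫⁻ z in A, F2 z.im) * M := lintegral_mul_const' _ _ hMne
    _ ≤ (ENNReal.ofReal (2*R) * ENNReal.ofReal R) * M := by
        apply mul_le_mul_left
        calc ∫⁻ z in A, F2 z.im
            ≤ ∫⁻ z in rect, F2 z.im :=
              lintegral_mono' (Measure.restrict_mono hsubrect le_rfl) le_rfl
          _ = ∫⁻ z in rect, (fun _ : ℝ => (1:ℝ≥0∞)) z.re * F2 z.im := by simp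
          _ = (∫⁻ u in Icc (-R) R, (1:ℝ≥0∞)) * ∫⁻ v in Ioc 0 R, F2 v :=
              rect_lintegral _ F2 measurable_const hF2m _ _
          _ ≤ ENNReal.ofReal (2*R) * ENNReal.ofReal R := by
              apply mul_le_mul'
              · rw [setLIntegral_one, Real.volume_Icc]
                apply ENNReal.ofReal_le_ofReal
                ring_nf
                linarith
              · exact y_lintegral_le δ R ⟨hδ0, hδ1⟩ hR1
    _ = B := by rw [hBdef]; ring
end

section
/- Let (Ω, ℱ, P) be a probability space, 𝒴 a complete separable metric space with its Borel σ-algebra, and let X_n, X : Ω → ℝ and Y_n, Y : Ω → 𝒴 be measurable, with X_n and X integrable. Let Z : Ω → ℝ be measurable. Assume: (i) E|X_n − X| → 0; (ii) Y_n → Y in probability; (iii) E[X_n | σ(Y_n)] → Z in probability. Then E[X_n | σ(Y_n)] → Z in L¹ (in particular Z is integrable), and E[Z | σ(Y)] = E[X | σ(Y)] almost surely. In particular, if Z is σ(Y)-measurable then Z = E[X | σ(Y)] almost surely. -/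
open MeasureTheory Filter Topology BoundedContinuousFunction
open scoped ENNReal NNReal

section Aux

variable {Ω : Type*} [MeasurableSpace Ω] {P : Measure Ω} [IsProbabilityMeasure P]

lemma aux_eLpNorm_tendsto {f : ℕ → Ω → ℝ}
    (hf : ∀ n, Integrable (f n) P)
    (h : Tendsto (fun n => ∫ ω, |f n ω| ∂P) atTop (𝓝 0)) :
    Tendsto (fun n => eLpNorm (f n) 1 P) atTop (𝓝 0) := by
  have heq : ∀ n, eLpNorm (f n) 1 P = ENNReal.ofReal (∫ ω, |f n ω| ∂P) := by
    intro n
    rw [eLpNorm_one_eq_lintegral_enorm,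
      ← ofReal_integral_norm_eq_lintegral_enorm (hf n)]
    simp [Real.norm_eq_abs]
  simp_rw [heq]
  have h0 : (0 : ℝ≥0∞) = ENNReal.ofReal 0 := by simp
  rw [h0]
  exact ENNReal.tendsto_ofReal h

lemma aux_integral_abs_tendsto {f : ℕ → Ω → ℝ}
    (hf : ∀ n, AEStronglyMeasurable (f n) P)
    (h : Tendsto (fun n => eLpNorm (f n) 1 P) atTop (𝓝 0)) :
    Tendsto (fun n => ∫ ω, |f n ω| ∂P) atTop (𝓝 0) := by
  have h2 := (ENNReal.tendsto_toReal (a := 0) (by simp)).comp h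
  simp only [Function.comp_def, ENNReal.toReal_zero] at h2
  refine h2.congr fun n => ?_
  rw [eLpNorm_one_eq_lintegral_enorm, ← integral_norm_eq_lintegral_enorm (hf n)]
  simp [Real.norm_eq_abs]

lemma aux_tendsto_integral_mul {𝒴 : Type*} [MetricSpace 𝒴] [MeasurableSpace 𝒴] [BorelSpace 𝒴]
    {Yn : ℕ → Ω → 𝒴} {Y : Ω → 𝒴} (hYn : ∀ n, Measurable (Yn n)) (hY : Measurable Y)
    (h2 : TendstoInMeasure P Yn atTop Y)
    {Wn : ℕ → Ω → ℝ} {W : Ω → ℝ} (hWn : ∀ n, Integrable (Wn n) P) (hW : Integrable W P)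
    (hL1 : Tendsto (fun n => ∫ ω, |Wn n ω - W ω| ∂P) atTop (𝓝 0))
    (f : 𝒴 →ᵇ ℝ) :
    Tendsto (fun n => ∫ ω, f (Yn n ω) * Wn n ω ∂P) atTop (𝓝 (∫ ω, f (Y ω) * W ω ∂P)) := by
  have hfm : Measurable (f : 𝒴 → ℝ) := f.continuous.measurable
  have hint1 : ∀ n, Integrable (fun ω => f (Yn n ω) * (Wn n ω - W ω)) P := fun n =>
    Integrable.bdd_mul ((hWn n).sub hW) ((hfm.comp (hYn n)).aestronglyMeasurable)
      (Eventually.of_forall fun ω => f.norm_coe_le_norm _)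
  have hint2 : ∀ n, Integrable (fun ω => (f (Yn n ω) - f (Y ω)) * W ω) P := fun n =>
    Integrable.bdd_mul hW (((hfm.comp (hYn n)).sub (hfm.comp hY)).aestronglyMeasurable)
      (Eventually.of_forall fun ω => show ‖f (Yn n ω) - f (Y ω)‖ ≤ 2 * ‖f‖ by
        calc ‖f (Yn n ω) - f (Y ω)‖ ≤ ‖f (Yn n ω)‖ + ‖f (Y ω)‖ := norm_sub_le _ _
        _ ≤ ‖f‖ + ‖f‖ := add_le_add (f.norm_coe_le_norm _) (f.norm_coe_le_norm _)
        _ = 2 * ‖f‖ := by ring)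
  have hint3 : Integrable (fun ω => f (Y ω) * W ω) P :=
    Integrable.bdd_mul hW ((hfm.comp hY).aestronglyMeasurable)
      (Eventually.of_forall fun ω => f.norm_coe_le_norm _)
  have hdecomp : ∀ n, ∫ ω, f (Yn n ω) * Wn n ω ∂P
      = (∫ ω, f (Yn n ω) * (Wn n ω - W ω) ∂P) + ((∫ ω, (f (Yn n ω) - f (Y ω)) * W ω ∂P)
        + ∫ ω, f (Y ω) * W ω ∂P) := by
    intro n
    have hfe : (fun ω => f (Yn n ω) * Wn n ω)
        = fun ω => f (Yn n ω) * (Wn n ω - W ω)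
          + ((f (Yn n ω) - f (Y ω)) * W ω + f (Y ω) * W ω) := by funext ω; ring
    have hint23 : Integrable (fun ω => (f (Yn n ω) - f (Y ω)) * W ω + f (Y ω) * W ω) P :=
      (hint2 n).add hint3
    rw [hfe, integral_add (hint1 n) hint23, integral_add (hint2 n) hint3]
  have ht1 : Tendsto (fun n => ∫ ω, f (Yn n ω) * (Wn n ω - W ω) ∂P) atTop (𝓝 0) := by
    apply squeeze_zero_norm (a := fun n => ‖f‖ * ∫ ω, |Wn n ω - W ω| ∂P) ?_ ?_
    · intro n
      calc ‖∫ ω, f (Yn n ω) * (Wn n ω - W ω) ∂P‖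
          ≤ ∫ ω, ‖f (Yn n ω) * (Wn n ω - W ω)‖ ∂P := norm_integral_le_integral_norm _
        _ ≤ ∫ ω, ‖f‖ * |Wn n ω - W ω| ∂P := by
            apply integral_mono (hint1 n).norm (((hWn n).sub hW).abs.const_mul _)
            intro ω
            simp only [Pi.sub_apply, norm_mul, Real.norm_eq_abs]
            exact mul_le_mul_of_nonneg_right (f.norm_coe_le_norm _) (abs_nonneg _)
        _ = ‖f‖ * ∫ ω, |Wn n ω - W ω| ∂P := integral_const_mul _ _
    · simpa using hL1.const_mul ‖f‖
  have ht2 : Tendsto (fun n => ∫ ω, (f (Yn n ω) - f (Y ω)) * W ω ∂P) atTop (𝓝 0) := by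
    apply tendsto_of_subseq_tendsto
    intro ns hns
    have h2' : TendstoInMeasure P (fun k => Yn (ns k)) atTop Y := fun ε hε => (h2 ε hε).comp hns
    obtain ⟨ms, -, hms⟩ := h2'.exists_seq_tendsto_ae
    refine ⟨ms, ?_⟩
    have hzero : (0 : ℝ) = ∫ ω, (f (Y ω) - f (Y ω)) * W ω ∂P := by simp
    rw [hzero]
    apply tendsto_integral_of_dominated_convergence (fun ω => 2 * ‖f‖ * |W ω|)
    · intro k
      exact (((hfm.comp (hYn _)).sub (hfm.comp hY)).aestronglyMeasurable).mul hW.1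
    · exact hW.abs.const_mul _
    · intro k
      filter_upwards with ω
      rw [norm_mul, Real.norm_eq_abs (W ω)]
      refine mul_le_mul_of_nonneg_right ?_ (abs_nonneg _)
      calc ‖f (Yn (ns (ms k)) ω) - f (Y ω)‖ ≤ ‖f (Yn (ns (ms k)) ω)‖ + ‖f (Y ω)‖ := norm_sub_le _ _
        _ ≤ ‖f‖ + ‖f‖ := add_le_add (f.norm_coe_le_norm _) (f.norm_coe_le_norm _)
        _ = 2 * ‖f‖ := by ring
    · filter_upwards [hms] with ω hω
      have hc : Tendsto (fun k => f (Yn (ns (ms k)) ω)) atTop (𝓝 (f (Y ω))) :=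
        (f.continuous.tendsto _).comp hω
      exact (hc.sub tendsto_const_nhds).mul tendsto_const_nhds
  have hfin := (ht1.add (ht2.add (tendsto_const_nhds (x := ∫ ω, f (Y ω) * W ω ∂P))))
  rw [zero_add, zero_add] at hfin
  exact hfin.congr fun n => (hdecomp n).symm

end Aux

set_option maxHeartbeats 1000000 in
/-- Lemma B.1: convergence of conditional expectations. If `Xₙ → X` in `L¹`,
`Yₙ → Y` in probability (in a Polish space), and `E[Xₙ | σ(Yₙ)] → Z` in probability, then
`E[Xₙ | σ(Yₙ)] → Z` in `L¹` (in particular `Z` is integrable), `E[Z | σ(Y)] = E[X | σ(Y)]`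
a.s., and in particular if `Z` is `σ(Y)`-measurable, then `Z = E[X | σ(Y)]` a.s. -/
theorem convergence_conditional_expectation
    {Ω : Type*} [MeasurableSpace Ω] (P : Measure Ω) [IsProbabilityMeasure P]
    {𝒴 : Type*} [MetricSpace 𝒴] [PolishSpace 𝒴] [MeasurableSpace 𝒴] [BorelSpace 𝒴]
    (Xn : ℕ → Ω → ℝ) (X : Ω → ℝ) (Yn : ℕ → Ω → 𝒴) (Y : Ω → 𝒴) (Z : Ω → ℝ)
    (hXnm : ∀ n, Measurable (Xn n)) (hXm : Measurable X)
    (hXn : ∀ n, Integrable (Xn n) P) (hX : Integrable X P)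
    (hYn : ∀ n, Measurable (Yn n)) (hY : Measurable Y) (hZ : Measurable Z)
    (h1 : Tendsto (fun n => ∫ ω, |Xn n ω - X ω| ∂P) atTop (𝓝 0))
    (h2 : TendstoInMeasure P Yn atTop Y)
    (h3 : TendstoInMeasure P
      (fun n => P[Xn n | MeasurableSpace.comap (Yn n) inferInstance]) atTop Z) :
    Tendsto (fun n => ∫ ω, |(P[Xn n | MeasurableSpace.comap (Yn n) inferInstance]) ω - Z ω| ∂P)
        atTop (𝓝 0)
      ∧ Integrable Z P
      ∧ P[Z | MeasurableSpace.comap Y inferInstance]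
          =ᵐ[P] P[X | MeasurableSpace.comap Y inferInstance]
      ∧ (Measurable[MeasurableSpace.comap Y inferInstance] Z →
          Z =ᵐ[P] P[X | MeasurableSpace.comap Y inferInstance]) := by
  set m : ℕ → MeasurableSpace Ω := fun n => MeasurableSpace.comap (Yn n) inferInstance
    with hm_def
  have hm : ∀ n, m n ≤ ‹MeasurableSpace Ω› := fun n => (hYn n).comap_le
  have hmY : MeasurableSpace.comap Y inferInstance ≤ ‹MeasurableSpace Ω› := hY.comap_le
  set CE : ℕ → Ω → ℝ := fun n => P[Xn n | m n] with hCE_def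
  have hCEi : ∀ n, Integrable (CE n) P := fun n => integrable_condExp
  have hCEasm : ∀ n, AEStronglyMeasurable (CE n) P := fun n => (hCEi n).aestronglyMeasurable
  have h3' : TendstoInMeasure P CE atTop Z := h3
  -- L¹ convergence of Xn to X in eLpNorm form
  have hL1X : Tendsto (fun n => eLpNorm (fun ω => Xn n ω - X ω) 1 P) atTop (𝓝 0) :=
    aux_eLpNorm_tendsto (fun n => (hXn n).sub hX) h1
  -- the difference CEₙ - E[X | σ(Yₙ)] tends to 0 in L¹
  have hDel : ∀ n, eLpNorm (fun ω => CE n ω - (P[X | m n]) ω) 1 P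
      ≤ eLpNorm (fun ω => Xn n ω - X ω) 1 P := by
    intro n
    have hae : (fun ω => CE n ω - (P[X | m n]) ω) =ᵐ[P] P[Xn n - X | m n] := by
      filter_upwards [condExp_sub (μ := P) (m := m n) (hXn n) hX] with ω hω
      simpa using hω.symm
    rw [eLpNorm_congr_ae hae]
    exact eLpNorm_one_condExp_le_eLpNorm _
  have hDconv : Tendsto (fun n => eLpNorm (fun ω => CE n ω - (P[X | m n]) ω) 1 P) atTop (𝓝 0) :=
    tendsto_of_tendsto_of_tendsto_of_le_of_le tendsto_const_nhds hL1X (fun n => zero_le) hDel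
  have hUIdiff : UnifIntegrable (fun n ω => CE n ω - (P[X | m n]) ω) 1 P :=
    unifIntegrable_of_tendsto_Lp_zero le_rfl ENNReal.one_ne_top
      (fun n => memLp_one_iff_integrable.2 ((hCEi n).sub integrable_condExp)) hDconv
  have hUIX : UniformIntegrable (fun n => P[X | m n]) 1 P := hX.uniformIntegrable_condExp hm
  have hUI : UnifIntegrable CE 1 P := by
    have hsum := hUIX.2.1.add hUIdiff le_rfl
      (fun n => (integrable_condExp : Integrable (P[X | m n]) P).aestronglyMeasurable)
      (fun n => ((hCEi n).sub integrable_condExp).aestronglyMeasurable)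
    refine hsum.ae_eq fun n => Eventually.of_forall fun ω => ?_
    simp only [Pi.add_apply]
    ring
  -- integrability of Z
  obtain ⟨ns, hns_mono, hns_ae⟩ := h3'.exists_seq_tendsto_ae
  have hfatou : eLpNorm Z 1 P ≤ atTop.liminf fun k => eLpNorm (CE (ns k)) 1 P :=
    Lp.eLpNorm_lim_le_liminf_eLpNorm (fun k => hCEasm (ns k)) Z hns_ae
  have hXe : eLpNorm X 1 P < ⊤ := (memLp_one_iff_integrable.2 hX).2
  have hBnd : ∀ᶠ k in atTop, eLpNorm (CE (ns k)) 1 P ≤ 1 + eLpNorm X 1 P := by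
    rw [ENNReal.tendsto_atTop_zero] at hL1X
    obtain ⟨N, hN⟩ := hL1X 1 (by norm_num)
    filter_upwards [(hns_mono.tendsto_atTop).eventually_ge_atTop N] with k hk
    calc eLpNorm (CE (ns k)) 1 P ≤ eLpNorm (Xn (ns k)) 1 P := eLpNorm_one_condExp_le_eLpNorm _
      _ = eLpNorm (fun ω => (Xn (ns k) ω - X ω) + X ω) 1 P := by
          congr 1; funext ω; ring
      _ ≤ eLpNorm (fun ω => Xn (ns k) ω - X ω) 1 P + eLpNorm X 1 P :=
          eLpNorm_add_le ((hXn _).sub hX).aestronglyMeasurable hX.aestronglyMeasurable le_rfl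
      _ ≤ 1 + eLpNorm X 1 P := add_le_add_left (hN _ hk) _
  have hliminf : (atTop.liminf fun k => eLpNorm (CE (ns k)) 1 P) ≤ 1 + eLpNorm X 1 P :=
    liminf_le_of_frequently_le' hBnd.frequently
  have hZmem : MemLp Z 1 P :=
    ⟨hZ.aestronglyMeasurable, lt_of_le_of_lt (hfatou.trans hliminf)
      (ENNReal.add_lt_top.2 ⟨ENNReal.one_lt_top, hXe⟩)⟩
  have hZint : Integrable Z P := memLp_one_iff_integrable.1 hZmem
  -- Vitali convergence
  have hL1CE : Tendsto (fun n => eLpNorm (CE n - Z) 1 P) atTop (𝓝 0) :=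
    tendsto_Lp_finite_of_tendstoInMeasure le_rfl ENNReal.one_ne_top hCEasm hZmem hUI h3'
  have goal1 : Tendsto (fun n => ∫ ω, |CE n ω - Z ω| ∂P) atTop (𝓝 0) :=
    aux_integral_abs_tendsto (f := fun n ω => CE n ω - Z ω)
      (fun n => ((hCEi n).sub hZint).aestronglyMeasurable) hL1CE
  -- key identity against bounded continuous functions
  have hkey : ∀ f : 𝒴 →ᵇ ℝ, ∫ ω, f (Y ω) * Z ω ∂P = ∫ ω, f (Y ω) * X ω ∂P := by
    intro f
    have hfm : Measurable (f : 𝒴 → ℝ) := f.continuous.measurable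
    have hA : ∀ n, ∫ ω, f (Yn n ω) * CE n ω ∂P = ∫ ω, f (Yn n ω) * Xn n ω ∂P := by
      intro n
      have hsm : StronglyMeasurable[m n] (fun ω => f (Yn n ω)) :=
        (hfm.comp (Measurable.of_comap_le le_rfl)).stronglyMeasurable
      have hi : Integrable ((fun ω => f (Yn n ω)) * Xn n) P :=
        Integrable.bdd_mul (hXn n) ((hfm.comp (hYn n)).aestronglyMeasurable)
          (Eventually.of_forall fun ω => f.norm_coe_le_norm _)
      have hmul := condExp_mul_of_stronglyMeasurable_left (μ := P) hsm hi (hXn n)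
      calc ∫ ω, f (Yn n ω) * CE n ω ∂P
          = ∫ ω, (P[(fun ω => f (Yn n ω)) * Xn n | m n]) ω ∂P :=
            (integral_congr_ae hmul).symm
        _ = ∫ ω, ((fun ω => f (Yn n ω)) * Xn n) ω ∂P := integral_condExp (hm n)
        _ = ∫ ω, f (Yn n ω) * Xn n ω ∂P := rfl
    have hlim1 : Tendsto (fun n => ∫ ω, f (Yn n ω) * Xn n ω ∂P) atTop
        (𝓝 (∫ ω, f (Y ω) * X ω ∂P)) :=
      aux_tendsto_integral_mul hYn hY h2 hXn hX h1 f
    have hlim2 : Tendsto (fun n => ∫ ω, f (Yn n ω) * CE n ω ∂P) atTop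
        (𝓝 (∫ ω, f (Y ω) * Z ω ∂P)) :=
      aux_tendsto_integral_mul hYn hY h2 hCEi hZint goal1 f
    exact tendsto_nhds_unique (hlim2.congr hA) hlim1
  -- from the integral identity to set integrals over σ(Y)-measurable sets
  have hsetEq : ∀ s, MeasurableSet[MeasurableSpace.comap Y inferInstance] s → ∫ ω in s, Z ω ∂P = ∫ ω in s, X ω ∂P := by
    set W : Ω → ℝ := fun ω => Z ω - X ω with hW_def
    have hWm : Measurable W := hZ.sub hXm
    have hWi : Integrable W P := hZint.sub hX
    have hW0 : ∀ f : 𝒴 →ᵇ ℝ, ∫ ω, f (Y ω) * W ω ∂P = 0 := by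
      intro f
      have hfm : Measurable (f : 𝒴 → ℝ) := f.continuous.measurable
      have hint1 : Integrable (fun ω => f (Y ω) * Z ω) P :=
        Integrable.bdd_mul hZint ((hfm.comp hY).aestronglyMeasurable)
          (Eventually.of_forall fun ω => f.norm_coe_le_norm _)
      have hint2 : Integrable (fun ω => f (Y ω) * X ω) P :=
        Integrable.bdd_mul hX ((hfm.comp hY).aestronglyMeasurable)
          (Eventually.of_forall fun ω => f.norm_coe_le_norm _)
      have h6 : ∫ ω, f (Y ω) * W ω ∂P
          = ∫ ω, f (Y ω) * Z ω ∂P - ∫ ω, f (Y ω) * X ω ∂P := by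
        rw [← integral_sub hint1 hint2]
        congr 1; funext ω; simp only [W]; ring
      rw [h6, hkey f, sub_self]
    have hcoeIso : Isometry ((↑) : ℝ≥0 → ℝ) := fun x y => rfl
    have hd1 : ∫⁻ ω, ENNReal.ofReal (W ω) ∂P ≠ ⊤ := by
      refine ne_top_of_le_ne_top hWi.2.ne (lintegral_mono fun ω => ?_)
      rw [Real.enorm_eq_ofReal_abs]
      exact ENNReal.ofReal_le_ofReal (le_abs_self _)
    have hd2 : ∫⁻ ω, ENNReal.ofReal (-W ω) ∂P ≠ ⊤ := by
      refine ne_top_of_le_ne_top hWi.2.ne (lintegral_mono fun ω => ?_)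
      rw [Real.enorm_eq_ofReal_abs]
      exact ENNReal.ofReal_le_ofReal (neg_le_abs _)
    set ρp : Measure Ω := P.withDensity fun ω => ENNReal.ofReal (W ω) with hρp_def
    set ρm : Measure Ω := P.withDensity fun ω => ENNReal.ofReal (-W ω) with hρm_def
    haveI : IsFiniteMeasure ρp := isFiniteMeasure_withDensity hd1
    haveI : IsFiniteMeasure ρm := isFiniteMeasure_withDensity hd2
    have hmapeq : ρp.map Y = ρm.map Y := by
      apply ext_of_forall_lintegral_eq_of_IsFiniteMeasure
      intro g
      let gR : 𝒴 →ᵇ ℝ := BoundedContinuousFunction.comp _ hcoeIso.lipschitz g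
      have hgR : ∀ y, gR y = (g y : ℝ) := fun y => rfl
      have hgRm : Measurable (gR : 𝒴 → ℝ) := gR.continuous.measurable
      have hgint : Integrable (fun ω => gR (Y ω) * W ω) P :=
        Integrable.bdd_mul hWi ((hgRm.comp hY).aestronglyMeasurable)
          (Eventually.of_forall fun ω => gR.norm_coe_le_norm _)
      have h7 := integral_eq_lintegral_pos_part_sub_lintegral_neg_part hgint
      rw [hW0 gR] at h7
      have hfin1 : ∫⁻ ω, ENNReal.ofReal (gR (Y ω) * W ω) ∂P ≠ ⊤ := by
        refine ne_top_of_le_ne_top hgint.2.ne (lintegral_mono fun ω => ?_)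
        rw [Real.enorm_eq_ofReal_abs]
        exact ENNReal.ofReal_le_ofReal (le_abs_self _)
      have hfin2 : ∫⁻ ω, ENNReal.ofReal (-(gR (Y ω) * W ω)) ∂P ≠ ⊤ := by
        refine ne_top_of_le_ne_top hgint.2.ne (lintegral_mono fun ω => ?_)
        rw [Real.enorm_eq_ofReal_abs]
        exact ENNReal.ofReal_le_ofReal (neg_le_abs _)
      have h8 : ∫⁻ ω, ENNReal.ofReal (gR (Y ω) * W ω) ∂P
          = ∫⁻ ω, ENNReal.ofReal (-(gR (Y ω) * W ω)) ∂P := by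
        have := sub_eq_zero.mp h7.symm
        exact (ENNReal.toReal_eq_toReal_iff' hfin1 hfin2).mp this
      have hgnn : ∀ y, (0:ℝ) ≤ gR y := fun y => (g y).2
      have hgmeas : Measurable fun y : 𝒴 => (g y : ℝ≥0∞) :=
        measurable_coe_nnreal_ennreal.comp g.continuous.measurable
      rw [lintegral_map hgmeas hY, lintegral_map hgmeas hY, hρp_def, hρm_def,
        lintegral_withDensity_eq_lintegral_mul P (by fun_prop)
          (show Measurable fun ω => (g (Y ω) : ℝ≥0∞) from hgmeas.comp hY),
        lintegral_withDensity_eq_lintegral_mul P (by fun_prop)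
          (show Measurable fun ω => (g (Y ω) : ℝ≥0∞) from hgmeas.comp hY)]
      calc ∫⁻ ω, ((fun ω => ENNReal.ofReal (W ω)) * fun ω => (g (Y ω) : ℝ≥0∞)) ω ∂P
          = ∫⁻ ω, ENNReal.ofReal (gR (Y ω) * W ω) ∂P := by
            apply lintegral_congr fun ω => ?_
            simp only [Pi.mul_apply]
            rw [ENNReal.ofReal_mul (hgnn _), hgR, ENNReal.ofReal_coe_nnreal, mul_comm]
        _ = ∫⁻ ω, ENNReal.ofReal (-(gR (Y ω) * W ω)) ∂P := h8
        _ = ∫⁻ ω, ((fun ω => ENNReal.ofReal (-W ω)) * fun ω => (g (Y ω) : ℝ≥0∞)) ω ∂P := by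
            apply lintegral_congr fun ω => ?_
            simp only [Pi.mul_apply]
            rw [show -(gR (Y ω) * W ω) = gR (Y ω) * (-W ω) by ring,
              ENNReal.ofReal_mul (hgnn _), hgR, ENNReal.ofReal_coe_nnreal, mul_comm]
    intro s hs
    obtain ⟨B, hB, rfl⟩ := hs
    have h9 : ρp (Y ⁻¹' B) = ρm (Y ⁻¹' B) := by
      rw [← Measure.map_apply hY hB, ← Measure.map_apply hY hB, hmapeq]
    have h10 : ∫⁻ ω in Y ⁻¹' B, ENNReal.ofReal (W ω) ∂P
        = ∫⁻ ω in Y ⁻¹' B, ENNReal.ofReal (-W ω) ∂P := by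
      rw [← withDensity_apply _ (hY hB), ← withDensity_apply _ (hY hB)]
      exact h9
    have hWir : Integrable W (P.restrict (Y ⁻¹' B)) := hWi.restrict
    have h11 := integral_eq_lintegral_pos_part_sub_lintegral_neg_part hWir
    rw [h10] at h11
    have h12 : ∫ ω in Y ⁻¹' B, W ω ∂P = 0 := by rw [h11, sub_self]
    have h13 : ∫ ω in Y ⁻¹' B, Z ω ∂P - ∫ ω in Y ⁻¹' B, X ω ∂P = 0 := by
      rw [← integral_sub hZint.restrict hX.restrict]
      exact h12
    linarith [h13]
  -- conclusion
  have goal3 : P[Z | MeasurableSpace.comap Y inferInstance]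
      =ᵐ[P] P[X | MeasurableSpace.comap Y inferInstance] := by
    refine ae_eq_condExp_of_forall_setIntegral_eq hmY hX
      (fun s _ _ => integrable_condExp.integrableOn) (fun s hs _ => ?_)
      stronglyMeasurable_condExp.aestronglyMeasurable
    rw [setIntegral_condExp hmY hZint hs]
    exact hsetEq s hs
  refine ⟨goal1, hZint, goal3, fun hZmeas => ?_⟩
  have hid : P[Z | MeasurableSpace.comap Y inferInstance] = Z :=
    condExp_of_stronglyMeasurable hmY hZmeas.stronglyMeasurable hZint
  exact hid ▸ goal3
end

section
/- Let (Ω, ℱ, P) be a probability space and 𝒳, 𝒴, 𝒵 complete separable metric spaces with their Borel σ-algebras. Let (X_n, Y_n, Z_n) and (X, Y, Z) be random variables with values in 𝒳 × 𝒴 × 𝒵 such that, for every n, Y_n and Z_n are conditionally independent given σ(X_n). Assume X_n → X, Y_n → Y and Z_n → Z in probability, and assume that for every bounded continuous f : 𝒴 → ℝ there exists a σ(X)-measurable real random variable w such that E[f(Y_n) | σ(X_n)] → w in probability. Then Y and Z are conditionally independent given σ(X). -/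
open MeasureTheory Filter Topology

/-- `Y` and `Z` are conditionally independent given the σ-algebra `m`, in the sense that
`E[f(Y)·g(Z) | m] = E[f(Y) | m] · E[g(Z) | m]` a.s. for all bounded continuous `f, g`. -/
def CondIndepVia {Ω : Type*} [MeasurableSpace Ω] (P : Measure Ω)
    {𝒴 𝒵 : Type*} [TopologicalSpace 𝒴] [TopologicalSpace 𝒵]
    (m : MeasurableSpace Ω) (Y : Ω → 𝒴) (Z : Ω → 𝒵) : Prop :=
  ∀ (f : BoundedContinuousFunction 𝒴 ℝ) (g : BoundedContinuousFunction 𝒵 ℝ),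
    P[fun ω => f (Y ω) * g (Z ω) | m]
      =ᵐ[P] fun ω => (P[fun ω' => f (Y ω') | m]) ω * (P[fun ω' => g (Z ω') | m]) ω

namespace CILaux

lemma tendstoInMeasure_comp {Ω : Type*} {mΩ : MeasurableSpace Ω} {P : Measure Ω}
    {E : Type*} [PseudoMetricSpace E] {u : ℕ → Ω → E} {v : Ω → E}
    (h : TendstoInMeasure P u atTop v) {ns : ℕ → ℕ} (hns : Tendsto ns atTop atTop) :
    TendstoInMeasure P (fun k => u (ns k)) atTop v :=
  fun ε hε => (h ε hε).comp hns

lemma exists_subseq_tendsto_ae {Ω : Type*} {mΩ : MeasurableSpace Ω} {P : Measure Ω}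
    {E : Type*} [MetricSpace E] {u : ℕ → Ω → E} {v : Ω → E}
    (h : TendstoInMeasure P u atTop v) {ns : ℕ → ℕ} (hns : Tendsto ns atTop atTop) :
    ∃ ms : ℕ → ℕ, StrictMono ms ∧
      ∀ᵐ ω ∂P, Tendsto (fun k => u (ns (ms k)) ω) atTop (𝓝 (v ω)) :=
  (tendstoInMeasure_comp h hns).exists_seq_tendsto_ae

lemma bdd_integrable {Ω : Type*} {mΩ : MeasurableSpace Ω} {P : Measure Ω} [IsFiniteMeasure P]
    {φ : Ω → ℝ} (hφ : AEStronglyMeasurable φ P) {c : ℝ}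
    (hb : ∀ᵐ ω ∂P, ‖φ ω‖ ≤ c) : Integrable φ P :=
  Integrable.mono' (integrable_const c) hφ hb

lemma tendsto_integral_aux {Ω : Type*} {mΩ : MeasurableSpace Ω} {P : Measure Ω}
    [IsFiniteMeasure P] {u : ℕ → Ω → ℝ} {v : Ω → ℝ} {C : ℝ}
    (hu : ∀ n, AEStronglyMeasurable (u n) P)
    (hb : ∀ n, ∀ᵐ ω ∂P, ‖u n ω‖ ≤ C)
    (hsub : ∀ ns : ℕ → ℕ, Tendsto ns atTop atTop →
      ∃ ms : ℕ → ℕ, StrictMono ms ∧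
        ∀ᵐ ω ∂P, Tendsto (fun k => u (ns (ms k)) ω) atTop (𝓝 (v ω))) :
    Tendsto (fun n => ∫ ω, u n ω ∂P) atTop (𝓝 (∫ ω, v ω ∂P)) := by
  refine tendsto_of_subseq_tendsto fun ns hns => ?_
  obtain ⟨ms, hms, hae⟩ := hsub ns hns
  exact ⟨ms, tendsto_integral_of_dominated_convergence (fun _ => C)
    (fun k => hu _) (integrable_const C) (fun k => hb _) hae⟩

lemma step_n {Ω : Type*} [mΩ : MeasurableSpace Ω] (P : Measure Ω) [IsProbabilityMeasure P]
    {𝒳 𝒴 𝒵 : Type*}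
    [MetricSpace 𝒳] [MeasurableSpace 𝒳] [BorelSpace 𝒳]
    [MetricSpace 𝒴] [MeasurableSpace 𝒴] [BorelSpace 𝒴]
    [MetricSpace 𝒵] [MeasurableSpace 𝒵] [BorelSpace 𝒵]
    (Xm : Ω → 𝒳) (Ym : Ω → 𝒴) (Zm : Ω → 𝒵)
    (hXm : Measurable Xm) (hYm : Measurable Ym) (hZm : Measurable Zm)
    (hciN : CondIndepVia P (MeasurableSpace.comap Xm inferInstance) Ym Zm)
    (f : BoundedContinuousFunction 𝒴 ℝ) (g : BoundedContinuousFunction 𝒵 ℝ)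
    (h : BoundedContinuousFunction 𝒳 ℝ) :
    ∫ ω, f (Ym ω) * g (Zm ω) * h (Xm ω) ∂P
      = ∫ ω, (P[fun ω' => f (Ym ω') | MeasurableSpace.comap Xm inferInstance]) ω
          * g (Zm ω) * h (Xm ω) ∂P := by
  set m : MeasurableSpace Ω := MeasurableSpace.comap Xm inferInstance with hm_def
  have hm : m ≤ mΩ := hXm.comap_le
  have hXmm : Measurable[m] Xm := Measurable.of_comap_le le_rfl
  set F : Ω → ℝ := fun ω => f (Ym ω) with hF_def
  set G : Ω → ℝ := fun ω => g (Zm ω) with hG_def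
  set H : Ω → ℝ := fun ω => h (Xm ω) with hH_def
  have hFmeas : Measurable[mΩ] F := f.continuous.measurable.comp hYm
  have hGmeas : Measurable[mΩ] G := g.continuous.measurable.comp hZm
  have hHmeas : Measurable[mΩ] H := h.continuous.measurable.comp hXm
  have hHsm : StronglyMeasurable[m] H :=
    (h.continuous.measurable.comp hXmm).stronglyMeasurable
  have hFb : ∀ ω, ‖F ω‖ ≤ ‖f‖ := fun ω => f.norm_coe_le_norm _
  have hGb : ∀ ω, ‖G ω‖ ≤ ‖g‖ := fun ω => g.norm_coe_le_norm _
  have hHb : ∀ ω, ‖H ω‖ ≤ ‖h‖ := fun ω => h.norm_coe_le_norm _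
  have hFint : Integrable F P := bdd_integrable hFmeas.aestronglyMeasurable (ae_of_all _ hFb)
  have hGint : Integrable G P := bdd_integrable hGmeas.aestronglyMeasurable (ae_of_all _ hGb)
  have hFGint : Integrable (F * G) P := by
    refine bdd_integrable (c := ‖f‖ * ‖g‖) ((hFmeas.mul hGmeas).aestronglyMeasurable)
      (ae_of_all _ fun ω => ?_)
    calc ‖F ω * G ω‖ ≤ ‖F ω‖ * ‖G ω‖ := norm_mul_le _ _
    _ ≤ ‖f‖ * ‖g‖ := mul_le_mul (hFb ω) (hGb ω) (norm_nonneg _) (norm_nonneg _)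
  set V : Ω → ℝ := P[F | m] with hV_def
  set W : Ω → ℝ := P[G | m] with hW_def
  have hVb : ∀ᵐ ω ∂P, |V ω| ≤ (‖f‖₊ : ℝ) :=
    ae_bdd_condExp_of_ae_bdd (ae_of_all _ fun ω => by
      simpa [← Real.norm_eq_abs, coe_nnnorm] using hFb ω)
  have hVsm : StronglyMeasurable[m] V := stronglyMeasurable_condExp
  have t1 : P[H * (F * G) | m] =ᵐ[P] H * P[F * G | m] :=
    condExp_stronglyMeasurable_mul_of_bound hm hHsm hFGint ‖h‖ (ae_of_all _ hHb)
  have t2 : P[F * G | m] =ᵐ[P] fun ω => V ω * W ω := hciN f g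
  have hHVsm : StronglyMeasurable[m] (H * V) := hHsm.mul hVsm
  have t3 : P[(H * V) * G | m] =ᵐ[P] (H * V) * P[G | m] := by
    refine condExp_stronglyMeasurable_mul_of_bound hm hHVsm hGint (‖h‖ * ‖f‖) ?_
    filter_upwards [hVb] with ω hω
    calc ‖(H * V) ω‖ = ‖H ω‖ * ‖V ω‖ := norm_mul _ _
    _ ≤ ‖h‖ * ‖f‖ := by
        refine mul_le_mul (hHb ω) ?_ (norm_nonneg _) (norm_nonneg _)
        simpa [Real.norm_eq_abs, coe_nnnorm] using hω
  have e1 : ∫ ω, F ω * G ω * H ω ∂P = ∫ ω, (H * (F * G)) ω ∂P :=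
    integral_congr_ae (Eventually.of_forall fun ω => by simp only [Pi.mul_apply]; ring)
  have e2 : ∫ ω, (H * (F * G)) ω ∂P = ∫ ω, (P[H * (F * G) | m]) ω ∂P :=
    (integral_condExp hm).symm
  have e3 : ∫ ω, (P[H * (F * G) | m]) ω ∂P = ∫ ω, H ω * (V ω * W ω) ∂P := by
    refine integral_congr_ae ?_
    filter_upwards [t1, t2] with ω hh1 hh2
    simp only [Pi.mul_apply] at hh1 hh2 ⊢
    rw [hh1, hh2]
  have e4 : ∫ ω, H ω * (V ω * W ω) ∂P = ∫ ω, ((H * V) * P[G | m]) ω ∂P :=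
    integral_congr_ae (Eventually.of_forall fun ω => by simp only [Pi.mul_apply]; ring)
  have e5 : ∫ ω, ((H * V) * P[G | m]) ω ∂P = ∫ ω, (P[(H * V) * G | m]) ω ∂P :=
    integral_congr_ae t3.symm
  have e6 : ∫ ω, (P[(H * V) * G | m]) ω ∂P = ∫ ω, ((H * V) * G) ω ∂P :=
    integral_condExp hm
  have e7 : ∫ ω, ((H * V) * G) ω ∂P = ∫ ω, V ω * G ω * H ω ∂P :=
    integral_congr_ae (Eventually.of_forall fun ω => by simp only [Pi.mul_apply]; ring)
  rw [e1, e2, e3, e4, e5, e6, e7]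

lemma key {Ω : Type*} [mΩ : MeasurableSpace Ω] (P : Measure Ω) [IsProbabilityMeasure P]
    {𝒳 𝒴 𝒵 : Type*}
    [MetricSpace 𝒳] [MeasurableSpace 𝒳] [BorelSpace 𝒳]
    [MetricSpace 𝒴] [MeasurableSpace 𝒴] [BorelSpace 𝒴]
    [MetricSpace 𝒵] [MeasurableSpace 𝒵] [BorelSpace 𝒵]
    (Xn : ℕ → Ω → 𝒳) (Yn : ℕ → Ω → 𝒴) (Zn : ℕ → Ω → 𝒵)
    (X : Ω → 𝒳) (Y : Ω → 𝒴) (Z : Ω → 𝒵)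
    (hXn : ∀ n, Measurable (Xn n)) (hYn : ∀ n, Measurable (Yn n))
    (hZn : ∀ n, Measurable (Zn n))
    (hX : Measurable X) (hY : Measurable Y) (hZ : Measurable Z)
    (hci : ∀ n, CondIndepVia P (MeasurableSpace.comap (Xn n) inferInstance) (Yn n) (Zn n))
    (h1 : TendstoInMeasure P Xn atTop X) (h2 : TendstoInMeasure P Yn atTop Y)
    (h3 : TendstoInMeasure P Zn atTop Z)
    (f : BoundedContinuousFunction 𝒴 ℝ) (g : BoundedContinuousFunction 𝒵 ℝ)
    (w : Ω → ℝ) (hw : Measurable[MeasurableSpace.comap X inferInstance] w)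
    (hwb : ∀ᵐ ω ∂P, |w ω| ≤ ‖f‖)
    (hwt : TendstoInMeasure P
      (fun n => P[fun ω => f (Yn n ω) | MeasurableSpace.comap (Xn n) inferInstance]) atTop w) :
    P[fun ω => f (Y ω) * g (Z ω) | MeasurableSpace.comap X inferInstance]
      =ᵐ[P] P[fun ω => w ω * g (Z ω) | MeasurableSpace.comap X inferInstance] := by
  have hmX : MeasurableSpace.comap X inferInstance ≤ mΩ := hX.comap_le
  set u : Ω → ℝ := fun ω => f (Y ω) * g (Z ω) with hu_def
  set v : Ω → ℝ := fun ω => w ω * g (Z ω) with hv_def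
  have hw_meas : Measurable[mΩ] w := hw.mono hmX le_rfl
  have hu_meas : Measurable[mΩ] u :=
    (f.continuous.measurable.comp hY).mul (g.continuous.measurable.comp hZ)
  have hv_meas : Measurable[mΩ] v := hw_meas.mul (g.continuous.measurable.comp hZ)
  have hub : ∀ ω, ‖u ω‖ ≤ ‖f‖ * ‖g‖ := fun ω => by
    calc ‖u ω‖ ≤ ‖f (Y ω)‖ * ‖g (Z ω)‖ := norm_mul_le _ _
    _ ≤ ‖f‖ * ‖g‖ := mul_le_mul (f.norm_coe_le_norm _) (g.norm_coe_le_norm _)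
        (norm_nonneg _) (norm_nonneg _)
  have hvb : ∀ᵐ ω ∂P, ‖v ω‖ ≤ ‖f‖ * ‖g‖ := by
    filter_upwards [hwb] with ω hω
    calc ‖v ω‖ ≤ ‖w ω‖ * ‖g (Z ω)‖ := norm_mul_le _ _
    _ ≤ ‖f‖ * ‖g‖ := mul_le_mul (by simpa [Real.norm_eq_abs] using hω)
        (g.norm_coe_le_norm _) (norm_nonneg _) (norm_nonneg _)
  have hu_int : Integrable u P := bdd_integrable hu_meas.aestronglyMeasurable (ae_of_all _ hub)
  have hv_int : Integrable v P := bdd_integrable hv_meas.aestronglyMeasurable hvb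
  -- The limiting identity against all bounded continuous test functions of X.
  have star : ∀ h : BoundedContinuousFunction 𝒳 ℝ,
      ∫ ω, u ω * h (X ω) ∂P = ∫ ω, v ω * h (X ω) ∂P := by
    intro h
    set Vn : ℕ → Ω → ℝ :=
      fun n => P[fun ω => f (Yn n ω) | MeasurableSpace.comap (Xn n) inferInstance] with hVn_def
    have hVnb : ∀ n, ∀ᵐ ω ∂P, |Vn n ω| ≤ (‖f‖₊ : ℝ) := fun n =>
      ae_bdd_condExp_of_ae_bdd (ae_of_all _ fun ω => by
        simpa [← Real.norm_eq_abs, coe_nnnorm] using f.norm_coe_le_norm (Yn n ω))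
    have hVnm : ∀ n, AEStronglyMeasurable (Vn n) P := fun n =>
      (stronglyMeasurable_condExp.mono (hXn n).comap_le).aestronglyMeasurable
    have eqn : ∀ n, ∫ ω, f (Yn n ω) * g (Zn n ω) * h (Xn n ω) ∂P
        = ∫ ω, Vn n ω * g (Zn n ω) * h (Xn n ω) ∂P := fun n =>
      step_n (mΩ := mΩ) P (Xn n) (Yn n) (Zn n) (hXn n) (hYn n) (hZn n) (hci n) f g h
    have limA : Tendsto (fun n => ∫ ω, f (Yn n ω) * g (Zn n ω) * h (Xn n ω) ∂P) atTop
        (𝓝 (∫ ω, u ω * h (X ω) ∂P)) := by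
      refine tendsto_integral_aux (C := ‖f‖ * ‖g‖ * ‖h‖)
        (fun n => (((f.continuous.measurable.comp (hYn n)).mul
          (g.continuous.measurable.comp (hZn n))).mul
          (h.continuous.measurable.comp (hXn n))).aestronglyMeasurable)
        (fun n => ae_of_all _ fun ω => ?_) ?_
      · calc ‖f (Yn n ω) * g (Zn n ω) * h (Xn n ω)‖
            ≤ ‖f (Yn n ω) * g (Zn n ω)‖ * ‖h (Xn n ω)‖ := norm_mul_le _ _
        _ ≤ (‖f‖ * ‖g‖) * ‖h‖ := by
            refine mul_le_mul ?_ (h.norm_coe_le_norm _) (norm_nonneg _)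
              (by positivity)
            calc ‖f (Yn n ω) * g (Zn n ω)‖ ≤ ‖f (Yn n ω)‖ * ‖g (Zn n ω)‖ := norm_mul_le _ _
            _ ≤ ‖f‖ * ‖g‖ := mul_le_mul (f.norm_coe_le_norm _) (g.norm_coe_le_norm _)
                (norm_nonneg _) (norm_nonneg _)
      · intro ns hns
        obtain ⟨m1, hm1, hX1⟩ := exists_subseq_tendsto_ae h1 hns
        obtain ⟨m2, hm2, hY2⟩ := exists_subseq_tendsto_ae h2 (hns.comp hm1.tendsto_atTop)
        obtain ⟨m3, hm3, hZ3⟩ := exists_subseq_tendsto_ae h3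
          ((hns.comp hm1.tendsto_atTop).comp hm2.tendsto_atTop)
        refine ⟨m1 ∘ m2 ∘ m3, hm1.comp (hm2.comp hm3), ?_⟩
        filter_upwards [hX1, hY2, hZ3] with ω hXω hYω hZω
        have hXω' : Tendsto (fun k => Xn (ns (m1 (m2 (m3 k)))) ω) atTop (𝓝 (X ω)) :=
          hXω.comp ((hm2.comp hm3).tendsto_atTop)
        have hYω' : Tendsto (fun k => Yn (ns (m1 (m2 (m3 k)))) ω) atTop (𝓝 (Y ω)) :=
          hYω.comp hm3.tendsto_atTop
        exact (((f.continuous.tendsto _).comp hYω').mul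
          ((g.continuous.tendsto _).comp hZω)).mul ((h.continuous.tendsto _).comp hXω')
    have limB : Tendsto (fun n => ∫ ω, Vn n ω * g (Zn n ω) * h (Xn n ω) ∂P) atTop
        (𝓝 (∫ ω, v ω * h (X ω) ∂P)) := by
      refine tendsto_integral_aux (C := ‖f‖ * ‖g‖ * ‖h‖)
        (fun n => ((hVnm n).mul
          (g.continuous.measurable.comp (hZn n)).aestronglyMeasurable).mul
          (h.continuous.measurable.comp (hXn n)).aestronglyMeasurable)
        (fun n => ?_) ?_
      · filter_upwards [hVnb n] with ω hω
        calc ‖Vn n ω * g (Zn n ω) * h (Xn n ω)‖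
            ≤ ‖Vn n ω * g (Zn n ω)‖ * ‖h (Xn n ω)‖ := norm_mul_le _ _
        _ ≤ (‖f‖ * ‖g‖) * ‖h‖ := by
            refine mul_le_mul ?_ (h.norm_coe_le_norm _) (norm_nonneg _) (by positivity)
            calc ‖Vn n ω * g (Zn n ω)‖ ≤ ‖Vn n ω‖ * ‖g (Zn n ω)‖ := norm_mul_le _ _
            _ ≤ ‖f‖ * ‖g‖ := mul_le_mul
                (by simpa [Real.norm_eq_abs, coe_nnnorm] using hω)
                (g.norm_coe_le_norm _) (norm_nonneg _) (norm_nonneg _)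
      · intro ns hns
        obtain ⟨m1, hm1, hX1⟩ := exists_subseq_tendsto_ae h1 hns
        obtain ⟨m2, hm2, hZ2⟩ := exists_subseq_tendsto_ae h3 (hns.comp hm1.tendsto_atTop)
        obtain ⟨m3, hm3, hV3⟩ := exists_subseq_tendsto_ae hwt
          ((hns.comp hm1.tendsto_atTop).comp hm2.tendsto_atTop)
        refine ⟨m1 ∘ m2 ∘ m3, hm1.comp (hm2.comp hm3), ?_⟩
        filter_upwards [hX1, hZ2, hV3] with ω hXω hZω hVω
        have hXω' : Tendsto (fun k => Xn (ns (m1 (m2 (m3 k)))) ω) atTop (𝓝 (X ω)) :=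
          hXω.comp ((hm2.comp hm3).tendsto_atTop)
        have hZω' : Tendsto (fun k => Zn (ns (m1 (m2 (m3 k)))) ω) atTop (𝓝 (Z ω)) :=
          hZω.comp hm3.tendsto_atTop
        exact (hVω.mul ((g.continuous.tendsto _).comp hZω')).mul
          ((h.continuous.tendsto _).comp hXω')
    exact tendsto_nhds_unique (limA.congr eqn) limB
  have Quniv : ∫ ω, u ω ∂P = ∫ ω, v ω ∂P := by
    have := star 1
    simpa using this
  -- extension to indicators of Borel sets
  have Q : ∀ ⦃B : Set 𝒳⦄, MeasurableSet B →
      ∫ ω in X ⁻¹' B, u ω ∂P = ∫ ω in X ⁻¹' B, v ω ∂P := by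
    have h_eq : (inferInstance : MeasurableSpace 𝒳)
        = MeasurableSpace.generateFrom {s : Set 𝒳 | IsClosed s} := by
      rw [BorelSpace.measurable_eq (α := 𝒳), borel_eq_generateFrom_isClosed]
    refine MeasurableSpace.induction_on_inter h_eq isPiSystem_isClosed ?_ ?_ ?_ ?_
    · simp
    · intro F hF
      have hFc : IsClosed F := hF
      rcases Set.eq_empty_or_nonempty F with rfl | hFne
      · simp
      -- bounded continuous approximations of the indicator of a closed set
      have hcont : ∀ k : ℕ, Continuous fun x : 𝒳 => max 0 (1 - (k + 1 : ℝ) * Metric.infDist x F) :=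
        fun k => continuous_const.max
          (continuous_const.sub (continuous_const.mul (Metric.continuous_infDist_pt F)))
      have hbnd : ∀ (k : ℕ) (x : 𝒳), ‖max 0 (1 - (k + 1 : ℝ) * Metric.infDist x F)‖ ≤ 1 := by
        intro k x
        have h0 : (0:ℝ) ≤ (k + 1 : ℝ) * Metric.infDist x F :=
          mul_nonneg (by positivity) Metric.infDist_nonneg
        rw [Real.norm_eq_abs, abs_le]
        constructor
        · linarith [le_max_left (0:ℝ) (1 - (k + 1 : ℝ) * Metric.infDist x F)]
        · exact max_le (by norm_num) (by linarith)
      set hk : ℕ → BoundedContinuousFunction 𝒳 ℝ := fun k =>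
        BoundedContinuousFunction.ofNormedAddCommGroup
          (fun x => max 0 (1 - (k + 1 : ℝ) * Metric.infDist x F)) (hcont k) 1 (hbnd k)
        with hk_def
      have hkb : ∀ (k : ℕ) (x : 𝒳), ‖hk k x‖ ≤ 1 := hbnd
      have hpt : ∀ x, Tendsto (fun k => hk k x) atTop
          (𝓝 (Set.indicator F (fun _ => (1:ℝ)) x)) := by
        intro x
        by_cases hx : x ∈ F
        · have hval : ∀ k : ℕ, hk k x = 1 := fun k => by
            simp [hk_def, BoundedContinuousFunction.coe_ofNormedAddCommGroup,
              Metric.infDist_zero_of_mem hx]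
          rw [Set.indicator_of_mem hx]
          simp only [hval]
          exact tendsto_const_nhds
        · have hd : 0 < Metric.infDist x F := (hFc.notMem_iff_infDist_pos hFne).mp hx
          rw [Set.indicator_of_notMem hx]
          have hev : ∀ᶠ k : ℕ in atTop, hk k x = 0 := by
            filter_upwards [eventually_ge_atTop ⌈1 / Metric.infDist x F⌉₊] with k hk'
            have h1k : 1 / Metric.infDist x F ≤ (k : ℝ) := by
              exact_mod_cast Nat.ceil_le.mp hk'
            have h2 : 1 ≤ (k : ℝ) * Metric.infDist x F := by
              rw [div_le_iff₀ hd] at h1k; linarith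
            have h3 : 1 - (k + 1 : ℝ) * Metric.infDist x F ≤ 0 := by nlinarith [hd.le]
            simp [hk_def, BoundedContinuousFunction.coe_ofNormedAddCommGroup, max_eq_left h3]
          exact Tendsto.congr' (EventuallyEq.symm hev) tendsto_const_nhds
      have hind_u : ∫ ω, u ω * Set.indicator F (fun _ => (1:ℝ)) (X ω) ∂P
          = ∫ ω in X ⁻¹' F, u ω ∂P := by
        rw [← integral_indicator (hX hFc.measurableSet)]
        refine integral_congr_ae (Eventually.of_forall fun ω => ?_)
        by_cases hω : X ω ∈ F <;> simp [Set.indicator_apply, Set.mem_preimage, hω]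
      have hind_v : ∫ ω, v ω * Set.indicator F (fun _ => (1:ℝ)) (X ω) ∂P
          = ∫ ω in X ⁻¹' F, v ω ∂P := by
        rw [← integral_indicator (hX hFc.measurableSet)]
        refine integral_congr_ae (Eventually.of_forall fun ω => ?_)
        by_cases hω : X ω ∈ F <;> simp [Set.indicator_apply, Set.mem_preimage, hω]
      have tendu : Tendsto (fun k => ∫ ω, u ω * hk k (X ω) ∂P) atTop
          (𝓝 (∫ ω, u ω * Set.indicator F (fun _ => (1:ℝ)) (X ω) ∂P)) := by
        refine tendsto_integral_of_dominated_convergence (fun _ => ‖f‖ * ‖g‖)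
          (fun k => (hu_meas.mul ((hk k).continuous.measurable.comp hX)).aestronglyMeasurable)
          (integrable_const _) (fun k => ae_of_all _ fun ω => ?_)
          (ae_of_all _ fun ω => tendsto_const_nhds.mul (hpt (X ω)))
        calc ‖u ω * hk k (X ω)‖ ≤ ‖u ω‖ * ‖hk k (X ω)‖ := norm_mul_le _ _
        _ ≤ (‖f‖ * ‖g‖) * 1 := mul_le_mul (hub ω) (hkb k (X ω)) (norm_nonneg _) (by positivity)
        _ = ‖f‖ * ‖g‖ := mul_one _
      have tendv : Tendsto (fun k => ∫ ω, v ω * hk k (X ω) ∂P) atTop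
          (𝓝 (∫ ω, v ω * Set.indicator F (fun _ => (1:ℝ)) (X ω) ∂P)) := by
        refine tendsto_integral_of_dominated_convergence (fun _ => ‖f‖ * ‖g‖)
          (fun k => (hv_meas.mul ((hk k).continuous.measurable.comp hX)).aestronglyMeasurable)
          (integrable_const _) (fun k => ?_)
          (ae_of_all _ fun ω => tendsto_const_nhds.mul (hpt (X ω)))
        filter_upwards [hvb] with ω hω
        calc ‖v ω * hk k (X ω)‖ ≤ ‖v ω‖ * ‖hk k (X ω)‖ := norm_mul_le _ _
        _ ≤ (‖f‖ * ‖g‖) * 1 := mul_le_mul hω (hkb k (X ω)) (norm_nonneg _) (by positivity)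
        _ = ‖f‖ * ‖g‖ := mul_one _
      rw [← hind_u, ← hind_v]
      exact tendsto_nhds_unique (tendu.congr fun k => star (hk k)) tendv
    · intro B hB hQB
      have hpre : MeasurableSet (X ⁻¹' B) := hX hB
      have hcu := integral_add_compl hpre hu_int
      have hcv := integral_add_compl hpre hv_int
      rw [Set.preimage_compl]
      linarith
    · intro s hd hmeas hQs
      rw [Set.preimage_iUnion]
      rw [integral_iUnion (fun i => hX (hmeas i))
          (hd.mono fun i j hij => hij.preimage X) hu_int.integrableOn,
        integral_iUnion (fun i => hX (hmeas i))
          (hd.mono fun i j hij => hij.preimage X) hv_int.integrableOn]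
      exact tsum_congr fun i => hQs i
  -- conclude via uniqueness of conditional expectation
  refine ae_eq_condExp_of_forall_setIntegral_eq hmX hv_int
    (fun s _ _ => integrable_condExp.integrableOn) (fun s hs _ => ?_)
    stronglyMeasurable_condExp.aestronglyMeasurable
  rw [setIntegral_condExp hmX hu_int hs]
  obtain ⟨B, hB, rfl⟩ := hs
  exact Q hB

end CILaux

/-- Lemma B.2: conditional independence is preserved in the limit. If for each
`n`, `Yₙ` and `Zₙ` are conditionally independent given `σ(Xₙ)`, if `Xₙ → X`, `Yₙ → Y`,
`Zₙ → Z` in probability, and if for every bounded continuous `f` the conditional expectations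
`E[f(Yₙ) | σ(Xₙ)]` converge in probability to some `σ(X)`-measurable limit, then `Y` and
`Z` are conditionally independent given `σ(X)`. -/
theorem conditional_independence_limit
    {Ω : Type*} [MeasurableSpace Ω] (P : Measure Ω) [IsProbabilityMeasure P]
    {𝒳 𝒴 𝒵 : Type*}
    [MetricSpace 𝒳] [PolishSpace 𝒳] [MeasurableSpace 𝒳] [BorelSpace 𝒳]
    [MetricSpace 𝒴] [PolishSpace 𝒴] [MeasurableSpace 𝒴] [BorelSpace 𝒴]
    [MetricSpace 𝒵] [PolishSpace 𝒵] [MeasurableSpace 𝒵] [BorelSpace 𝒵]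
    (Xn : ℕ → Ω → 𝒳) (Yn : ℕ → Ω → 𝒴) (Zn : ℕ → Ω → 𝒵)
    (X : Ω → 𝒳) (Y : Ω → 𝒴) (Z : Ω → 𝒵)
    (hXn : ∀ n, Measurable (Xn n)) (hYn : ∀ n, Measurable (Yn n))
    (hZn : ∀ n, Measurable (Zn n))
    (hX : Measurable X) (hY : Measurable Y) (hZ : Measurable Z)
    (hci : ∀ n, CondIndepVia P (MeasurableSpace.comap (Xn n) inferInstance) (Yn n) (Zn n))
    (h1 : TendstoInMeasure P Xn atTop X)
    (h2 : TendstoInMeasure P Yn atTop Y)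
    (h3 : TendstoInMeasure P Zn atTop Z)
    (h4 : ∀ f : BoundedContinuousFunction 𝒴 ℝ, ∃ w : Ω → ℝ,
      Measurable[MeasurableSpace.comap X inferInstance] w ∧
      TendstoInMeasure P
        (fun n => P[fun ω => f (Yn n ω) | MeasurableSpace.comap (Xn n) inferInstance])
        atTop w) :
    CondIndepVia P (MeasurableSpace.comap X inferInstance) Y Z := by
  intro f g
  obtain ⟨w, hw, hwt⟩ := h4 f
  have hmX : MeasurableSpace.comap X inferInstance ≤ ‹MeasurableSpace Ω› := hX.comap_le
  -- the limit `w` is a.e. bounded by `‖f‖`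
  have hwb : ∀ᵐ ω ∂P, |w ω| ≤ ‖f‖ := by
    obtain ⟨ns, hns, hae⟩ := hwt.exists_seq_tendsto_ae
    have hVb : ∀ n, ∀ᵐ ω ∂P,
        |(P[fun ω' => f (Yn n ω') | MeasurableSpace.comap (Xn n) inferInstance]) ω|
          ≤ (‖f‖₊ : ℝ) := fun n =>
      ae_bdd_condExp_of_ae_bdd (ae_of_all _ fun ω => by
        simpa [← Real.norm_eq_abs, coe_nnnorm] using f.norm_coe_le_norm (Yn n ω))
    filter_upwards [hae, ae_all_iff.mpr hVb] with ω hω hbω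
    have habs : Tendsto (fun k =>
        |(P[fun ω' => f (Yn (ns k) ω') | MeasurableSpace.comap (Xn (ns k)) inferInstance]) ω|)
        atTop (𝓝 |w ω|) := hω.abs
    refine le_of_tendsto habs (Eventually.of_forall fun k => ?_)
    simpa [coe_nnnorm] using hbω (ns k)
  have eqg := CILaux.key P Xn Yn Zn X Y Z hXn hYn hZn hX hY hZ hci h1 h2 h3 f g w hw hwb hwt
  have eq1 := CILaux.key P Xn Yn Zn X Y Z hXn hYn hZn hX hY hZ hci h1 h2 h3 f 1 w hw hwb hwt
  simp only [BoundedContinuousFunction.coe_one, Pi.one_apply, mul_one] at eq1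
  have hwsm : StronglyMeasurable[MeasurableSpace.comap X inferInstance] w := hw.stronglyMeasurable
  have hw_meas : Measurable w := hw.mono hmX le_rfl
  have hw_int : Integrable w P := CILaux.bdd_integrable hw_meas.aestronglyMeasurable
    (by simpa [Real.norm_eq_abs] using hwb)
  have hcw : P[w | MeasurableSpace.comap X inferInstance] = w :=
    condExp_of_stronglyMeasurable hmX hwsm hw_int
  have hG_int : Integrable (fun ω => g (Z ω)) P :=
    CILaux.bdd_integrable (g.continuous.measurable.comp hZ).aestronglyMeasurable
      (ae_of_all _ fun ω => g.norm_coe_le_norm _)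
  have mulw : P[fun ω => w ω * g (Z ω) | MeasurableSpace.comap X inferInstance]
      =ᵐ[P] fun ω => w ω * (P[fun ω' => g (Z ω') | MeasurableSpace.comap X inferInstance]) ω :=
    condExp_stronglyMeasurable_mul_of_bound hmX hwsm hG_int ‖f‖
      (by simpa [Real.norm_eq_abs] using hwb)
  refine eqg.trans (mulw.trans ?_)
  filter_upwards [eq1] with ω hω
  have : (P[fun ω' => f (Y ω') | MeasurableSpace.comap X inferInstance]) ω = w ω := by
    rw [hω, hcw]
  rw [this]
end

section
/- Let (Ω, ℱ, P) be a probability space and (E, d) a proper (closed balls compact) separable metric space. For each n let 𝔪_n(ω) and 𝔪(ω) be Borel measures on E that are finite on compact sets, and let A_n(ω), A(ω) be nonempty compact subsets of E; assume all the quantities below are measurable in ω. Suppose: (i) almost surely, ∫ f d𝔪_n → ∫ f d𝔪 for every continuous compactly supported f : E → ℝ; (ii) almost surely, the Hausdorff distance d_H(A_n, A) → 0; (iii) for every a > 0, lim_{ε→0} sup_n P( 𝔪_n((A_n)_ε) − 𝔪_n(A_n) ≥ a ) = 0, where (A_n)_ε := {x ∈ E : d(x, A_n) < ε}. Then 𝔪_n(A_n)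 → 𝔪(A) in probability, i.e. P(|𝔪_n(A_n) − 𝔪(A)| ≥ a) → 0 for every a > 0. -/
open MeasureTheory Filter Topology Metric
open scoped ENNReal


lemma aux_subset_thickening {E : Type*} [MetricSpace E] {s t : Set E}
    (hs : s.Nonempty) (ht : t.Nonempty) (hbs : Bornology.IsBounded s)
    (hbt : Bornology.IsBounded t) {δ : ℝ} (h : hausdorffDist s t < δ) :
    s ⊆ thickening δ t := fun x hx =>
  (mem_thickening_iff_infDist_lt ht).2
    ((infDist_le_hausdorffDist_of_mem hx
      (hausdorffEdist_ne_top_of_nonempty_of_bounded hs ht hbs hbt)).trans_lt h)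

lemma aux_measure_le_integral {E : Type*} [MetricSpace E] [MeasurableSpace E] [BorelSpace E]
    (μ : Measure E) [IsFiniteMeasureOnCompacts μ] {f : E → ℝ} (hfc : Continuous f)
    (hfs : HasCompactSupport f) (hf0 : ∀ x, 0 ≤ f x) {s : Set E} (hsm : MeasurableSet s)
    (hsfin : μ s ≠ ⊤) (h1 : ∀ x ∈ s, 1 ≤ f x) : (μ s).toReal ≤ ∫ x, f x ∂μ := by
  rw [← measureReal_def, ← integral_indicator_one hsm]
  refine integral_mono ?_ (hfc.integrable_of_hasCompactSupport hfs) ?_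
  · exact (integrable_indicator_iff hsm).2 (integrableOn_const hsfin)
  · intro x
    by_cases hx : x ∈ s
    · simpa [Set.indicator_of_mem hx] using h1 x hx
    · simpa [Set.indicator_of_notMem hx] using hf0 x

lemma aux_integral_le_measure {E : Type*} [MetricSpace E] [MeasurableSpace E] [BorelSpace E]
    (μ : Measure E) [IsFiniteMeasureOnCompacts μ] {f : E → ℝ} (hfc : Continuous f)
    (hfs : HasCompactSupport f) (hf1 : ∀ x, f x ≤ 1) {U : Set E} (hUm : MeasurableSet U)
    (hUfin : μ U ≠ ⊤) (h0 : ∀ x ∉ U, f x = 0) : ∫ x, f x ∂μ ≤ (μ U).toReal := by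
  rw [← measureReal_def, ← integral_indicator_one hUm]
  refine integral_mono (hfc.integrable_of_hasCompactSupport hfs)
    ((integrable_indicator_iff hUm).2 (integrableOn_const hUfin)) ?_
  intro x
  by_cases hx : x ∈ U
  · simpa [Set.indicator_of_mem hx] using hf1 x
  · simp [Set.indicator_of_notMem hx, (h0 x hx).le]

lemma aux_upper {E : Type*} [MetricSpace E] [ProperSpace E] [MeasurableSpace E] [BorelSpace E]
    (μn : ℕ → Measure E) (μ : Measure E)
    (hfin_n : ∀ n (K : Set E), IsCompact K → μn n K < ⊤)
    (hfin : ∀ K : Set E, IsCompact K → μ K < ⊤)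
    (An : ℕ → Set E) (A : Set E)
    (hAn : ∀ n, IsCompact (An n) ∧ (An n).Nonempty)
    (hA : IsCompact A) (hAne : A.Nonempty)
    (hconv : ∀ f : E → ℝ, Continuous f → HasCompactSupport f →
       Tendsto (fun n => ∫ x, f x ∂(μn n)) atTop (𝓝 (∫ x, f x ∂μ)))
    (hH : Tendsto (fun n => hausdorffDist (An n) A) atTop (𝓝 0))
    {a : ℝ} (ha : 0 < a) :
    ∀ᶠ n in atTop, (μn n (An n)).toReal < (μ A).toReal + a := by
  haveI : IsFiniteMeasureOnCompacts μ := ⟨fun _ hK => hfin _ hK⟩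
  have hcth : Tendsto (fun r => μ (cthickening r A)) (𝓝 0) (𝓝 (μ A)) :=
    tendsto_measure_cthickening_of_isCompact hA
  have hlt : μ A < μ A + ENNReal.ofReal (a / 2) :=
    ENNReal.lt_add_right (hfin A hA).ne (by simp [ENNReal.ofReal_eq_zero]; linarith)
  have h0 : ∀ᶠ r in 𝓝[>] (0 : ℝ), μ (cthickening r A) < μ A + ENNReal.ofReal (a / 2) :=
    (hcth.mono_left nhdsWithin_le_nhds).eventually (gt_mem_nhds hlt)
  obtain ⟨δ, hδ, δpos⟩ := (h0.and self_mem_nhdsWithin).exists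
  replace δpos : 0 < δ := δpos
  -- Urysohn function
  obtain ⟨f, hf1, hf0, hfs, hficc⟩ :=
    exists_continuous_one_zero_of_isCompact (hA.cthickening (r := δ / 2))
      (isOpen_thickening (δ := δ) (E := A)).isClosed_compl
      (Set.disjoint_compl_right_iff_subset.mpr (cthickening_subset_thickening' δpos (half_lt_self δpos) A))
  have hint : ∫ x, f x ∂μ ≤ (μ (cthickening δ A)).toReal := by
    refine aux_integral_le_measure μ f.continuous hfs (fun x => (hficc x).2)
      isClosed_cthickening.measurableSet (hfin _ hA.cthickening).ne (fun x hx => hf0 ?_)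
    exact fun hx' => hx (thickening_subset_cthickening δ A hx')
  have h2 : (μ (cthickening δ A)).toReal ≤ (μ A).toReal + a / 2 := by
    have h3 := ENNReal.toReal_mono (by finiteness) hδ.le
    rwa [ENNReal.toReal_add (hfin A hA).ne ENNReal.ofReal_ne_top,
      ENNReal.toReal_ofReal (by linarith)] at h3
  have hev : ∀ᶠ n in atTop, hausdorffDist (An n) A < δ / 2 :=
    hH.eventually (gt_mem_nhds (half_pos δpos))
  have hev2 : ∀ᶠ n in atTop, ∫ x, f x ∂(μn n) < (μ A).toReal + a :=
    (hconv f f.continuous hfs).eventually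
      (gt_mem_nhds ((hint.trans h2).trans_lt (by linarith)))
  filter_upwards [hev, hev2] with n h1n h2n
  haveI : IsFiniteMeasureOnCompacts (μn n) := ⟨fun _ hK => hfin_n n _ hK⟩
  have hsub : An n ⊆ cthickening (δ / 2) A :=
    (aux_subset_thickening (hAn n).2 hAne (hAn n).1.isBounded hA.isBounded h1n).trans
      (thickening_subset_cthickening _ _)
  have hle : (μn n (An n)).toReal ≤ ∫ x, f x ∂(μn n) :=
    aux_measure_le_integral (μn n) f.continuous hfs (fun x => (hficc x).1)
      (hAn n).1.isClosed.measurableSet (hfin_n n _ (hAn n).1).ne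
      (fun x hx => (hf1 (hsub hx)).ge)
  linarith

lemma aux_lower {E : Type*} [MetricSpace E] [ProperSpace E] [MeasurableSpace E] [BorelSpace E]
    (μn : ℕ → Measure E) (μ : Measure E)
    (hfin_n : ∀ n (K : Set E), IsCompact K → μn n K < ⊤)
    (hfin : ∀ K : Set E, IsCompact K → μ K < ⊤)
    (An : ℕ → Set E) (A : Set E)
    (hAn : ∀ n, IsCompact (An n) ∧ (An n).Nonempty)
    (hA : IsCompact A) (hAne : A.Nonempty)
    (hconv : ∀ f : E → ℝ, Continuous f → HasCompactSupport f →
       Tendsto (fun n => ∫ x, f x ∂(μn n)) atTop (𝓝 (∫ x, f x ∂μ)))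
    (hH : Tendsto (fun n => hausdorffDist (An n) A) atTop (𝓝 0))
    {ε : ℝ} (hε : 0 < ε) {a : ℝ} (ha : 0 < a) :
    ∀ᶠ n in atTop, (μ A).toReal - a < (μn n (thickening ε (An n))).toReal := by
  haveI : IsFiniteMeasureOnCompacts μ := ⟨fun _ hK => hfin _ hK⟩
  obtain ⟨f, hf1, hf0, hfs, hficc⟩ :=
    exists_continuous_one_zero_of_isCompact hA
      (isOpen_thickening (δ := ε / 2) (E := A)).isClosed_compl
      (Set.disjoint_compl_right_iff_subset.mpr (self_subset_thickening (half_pos hε) A))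
  have hlow : (μ A).toReal ≤ ∫ x, f x ∂μ :=
    aux_measure_le_integral μ f.continuous hfs (fun x => (hficc x).1)
      hA.isClosed.measurableSet (hfin A hA).ne (fun x hx => (hf1 hx).ge)
  have hev2 : ∀ᶠ n in atTop, (μ A).toReal - a < ∫ x, f x ∂(μn n) :=
    (hconv f f.continuous hfs).eventually (lt_mem_nhds (by linarith))
  have hev : ∀ᶠ n in atTop, hausdorffDist (An n) A < ε / 2 :=
    hH.eventually (gt_mem_nhds (half_pos hε))
  filter_upwards [hev, hev2] with n h1n h2n
  haveI : IsFiniteMeasureOnCompacts (μn n) := ⟨fun _ hK => hfin_n n _ hK⟩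
  have hsub : thickening (ε / 2) A ⊆ thickening ε (An n) := by
    have hA' : A ⊆ thickening (ε / 2) (An n) := by
      refine aux_subset_thickening hAne (hAn n).2 hA.isBounded (hAn n).1.isBounded ?_
      rwa [hausdorffDist_comm]
    calc thickening (ε / 2) A ⊆ thickening (ε / 2) (thickening (ε / 2) (An n)) :=
          thickening_subset_of_subset _ hA'
      _ ⊆ thickening (ε / 2 + ε / 2) (An n) := thickening_thickening_subset _ _ _
      _ = thickening ε (An n) := by rw [add_halves]
  have hup : ∫ x, f x ∂(μn n) ≤ (μn n (thickening ε (An n))).toReal := by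
    refine aux_integral_le_measure (μn n) f.continuous hfs (fun x => (hficc x).2)
      isOpen_thickening.measurableSet ?_ (fun x hx => hf0 (fun hx' => hx (hsub hx')))
    exact ((measure_mono (thickening_subset_cthickening ε (An n))).trans_lt
      (hfin_n n _ (hAn n).1.cthickening)).ne
  linarith

lemma aux_tendsto_zero {Ω : Type*} [MeasurableSpace Ω] (P : Measure Ω) [IsFiniteMeasure P]
    (F : ℕ → Set Ω) (hF : ∀ n, MeasurableSet (F n))
    (h : ∀ᵐ ω ∂P, ∀ᶠ n in atTop, ω ∉ F n) :
    Tendsto (fun n => P (F n)) atTop (𝓝 0) := by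
  have heq : ∀ n, P (F n) = ∫⁻ ω, (F n).indicator (fun _ => (1 : ℝ≥0∞)) ω ∂P := by
    intro n
    have := lintegral_indicator_one (μ := P) (hF n)
    simp only [Pi.one_def] at this
    rw [this]
  simp only [heq]
  have key := tendsto_lintegral_of_dominated_convergence (μ := P)
    (F := fun n ω => (F n).indicator (fun _ => (1 : ℝ≥0∞)) ω) (f := fun _ => 0)
    (bound := fun _ => 1) (fun n => measurable_const.indicator (hF n))
    (fun n => ae_of_all _ fun ω => Set.indicator_le' (fun _ _ => le_rfl) (fun _ _ => zero_le_one) ω)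
    (by simp [lintegral_one])
    (h.mono fun ω hω => by
      refine tendsto_const_nhds.congr' ?_
      filter_upwards [hω] with n hn
      simp [Set.indicator_of_notMem hn])
  simpa using key

/-- Lemma B.3: convergence of the mass of converging sets under converging
random measures. If a.s. `𝔪ₙ → 𝔪` vaguely, a.s. `Aₙ → A` in Hausdorff distance, and the
masses of small thickenings of `Aₙ` are uniformly (in `n`) controlled in probability, then
`𝔪ₙ(Aₙ) → 𝔪(A)` in probability. -/
theorem mass_of_converging_sets
    {Ω : Type*} [MeasurableSpace Ω] (P : Measure Ω) [IsProbabilityMeasure P]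
    {E : Type*} [MetricSpace E] [ProperSpace E] [TopologicalSpace.SeparableSpace E]
    [MeasurableSpace E] [BorelSpace E]
    (𝔪n : ℕ → Ω → Measure E) (𝔪 : Ω → Measure E)
    (An : ℕ → Ω → Set E) (A : Ω → Set E)
    (hfin_n : ∀ n ω (K : Set E), IsCompact K → 𝔪n n ω K < ⊤)
    (hfin : ∀ ω (K : Set E), IsCompact K → 𝔪 ω K < ⊤)
    (hAn : ∀ n ω, IsCompact (An n ω) ∧ (An n ω).Nonempty)
    (hA : ∀ ω, IsCompact (A ω) ∧ (A ω).Nonempty)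
    (hmeas1 : ∀ n, Measurable fun ω => 𝔪n n ω (An n ω))
    (hmeas2 : ∀ n, ∀ ε : ℝ, 0 < ε → Measurable fun ω => 𝔪n n ω (thickening ε (An n ω)))
    (hmeas3 : Measurable fun ω => 𝔪 ω (A ω))
    (h1 : ∀ᵐ ω ∂P, ∀ f : E → ℝ, Continuous f → HasCompactSupport f →
      Tendsto (fun n => ∫ x, f x ∂(𝔪n n ω)) atTop (𝓝 (∫ x, f x ∂(𝔪 ω))))
    (h2 : ∀ᵐ ω ∂P, Tendsto (fun n => hausdorffDist (An n ω) (A ω)) atTop (𝓝 0))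
    (h3 : ∀ a : ℝ, 0 < a →
      Tendsto (fun ε : ℝ => ⨆ n,
          P {ω | ENNReal.ofReal a ≤ 𝔪n n ω (thickening ε (An n ω)) - 𝔪n n ω (An n ω)})
        (𝓝[>] (0 : ℝ)) (𝓝 0)) :
    ∀ a : ℝ, 0 < a →
      Tendsto (fun n => P {ω | a ≤ |(𝔪n n ω (An n ω)).toReal - (𝔪 ω (A ω)).toReal|})
        atTop (𝓝 0) := by
  intro a ha
  rw [ENNReal.tendsto_atTop_zero]
  intro δ hδ
  have hδ3 : (0 : ℝ≥0∞) < δ / 3 := ENNReal.div_pos hδ.ne' (by norm_num)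
  -- choose ε from h3
  obtain ⟨ε, hsup, hε⟩ :=
    (((h3 (a / 2) (half_pos ha)).eventually (gt_mem_nhds hδ3)).and self_mem_nhdsWithin).exists
  replace hε : 0 < ε := hε
  -- the three events
  set Mn : ℕ → Ω → ℝ := fun n ω => (𝔪n n ω (An n ω)).toReal with hMn
  set M : Ω → ℝ := fun ω => (𝔪 ω (A ω)).toReal with hM
  set Mε : ℕ → Ω → ℝ := fun n ω => (𝔪n n ω (thickening ε (An n ω))).toReal with hMε
  have hMnm : ∀ n, Measurable (Mn n) := fun n => (hmeas1 n).ennreal_toReal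
  have hMm : Measurable M := hmeas3.ennreal_toReal
  have hMεm : ∀ n, Measurable (Mε n) := fun n => (hmeas2 n ε hε).ennreal_toReal
  set F : ℕ → Set Ω := fun n => {ω | M ω + a ≤ Mn n ω} with hF
  set G : ℕ → Set Ω := fun n => {ω | Mε n ω + a / 2 ≤ M ω} with hG
  set H : ℕ → Set Ω := fun n =>
    {ω | ENNReal.ofReal (a / 2) ≤ 𝔪n n ω (thickening ε (An n ω)) - 𝔪n n ω (An n ω)} with hH
  have hFm : ∀ n, MeasurableSet (F n) := fun n =>
    measurableSet_le (hMm.add measurable_const) (hMnm n)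
  have hGm : ∀ n, MeasurableSet (G n) := fun n =>
    measurableSet_le ((hMεm n).add measurable_const) hMm
  -- F and G eventually a.s. not hit
  have hFae : ∀ᵐ ω ∂P, ∀ᶠ n in atTop, ω ∉ F n := by
    filter_upwards [h1, h2] with ω hω1 hω2
    have := aux_upper (fun n => 𝔪n n ω) (𝔪 ω) (fun n K hK => hfin_n n ω K hK)
      (fun K hK => hfin ω K hK) (fun n => An n ω) (A ω) (fun n => hAn n ω)
      (hA ω).1 (hA ω).2 hω1 hω2 ha
    refine this.mono fun n hn => ?_
    simp only [F, Set.mem_setOf_eq, not_le, Mn, M]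
    linarith
  have hGae : ∀ᵐ ω ∂P, ∀ᶠ n in atTop, ω ∉ G n := by
    filter_upwards [h1, h2] with ω hω1 hω2
    have := aux_lower (fun n => 𝔪n n ω) (𝔪 ω) (fun n K hK => hfin_n n ω K hK)
      (fun K hK => hfin ω K hK) (fun n => An n ω) (A ω) (fun n => hAn n ω)
      (hA ω).1 (hA ω).2 hω1 hω2 hε (half_pos ha)
    refine this.mono fun n hn => ?_
    simp only [G, Set.mem_setOf_eq, not_le, Mε, M]
    linarith
  have hFten := aux_tendsto_zero P F hFm hFae
  have hGten := aux_tendsto_zero P G hGm hGae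
  have hFev : ∀ᶠ n in atTop, P (F n) < δ / 3 := hFten.eventually (gt_mem_nhds hδ3)
  have hGev : ∀ᶠ n in atTop, P (G n) < δ / 3 := hGten.eventually (gt_mem_nhds hδ3)
  obtain ⟨N, hN⟩ := (hFev.and hGev).exists_forall_of_atTop
  refine ⟨N, fun n hn => ?_⟩
  -- event inclusion
  have hincl : {ω | a ≤ |(𝔪n n ω (An n ω)).toReal - (𝔪 ω (A ω)).toReal|}
      ⊆ F n ∪ G n ∪ H n := by
    intro ω hω
    simp only [Set.mem_setOf_eq] at hω
    by_cases hF1 : M ω + a ≤ Mn n ω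
    · exact Or.inl (Or.inl hF1)
    push_neg at hF1
    have habs : M ω - Mn n ω ≥ a := by
      rcases abs_cases ((𝔪n n ω (An n ω)).toReal - (𝔪 ω (A ω)).toReal) with ⟨he, _⟩ | ⟨he, _⟩
      · exfalso; rw [he] at hω; simp only [Mn, M] at hF1; linarith
      · rw [he] at hω; simp only [M, Mn]; linarith
    by_cases hG1 : Mε n ω + a / 2 ≤ M ω
    · exact Or.inl (Or.inr hG1)
    push_neg at hG1
    -- now Mn n ω + a/2 ≤ Mε n ω
    have hkey : Mn n ω + a / 2 ≤ Mε n ω := by linarith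
    refine Or.inr ?_
    have htop : 𝔪n n ω (thickening ε (An n ω)) ≠ ⊤ :=
      ((measure_mono (thickening_subset_cthickening ε (An n ω))).trans_lt
        (hfin_n n ω _ (hAn n ω).1.cthickening)).ne
    have hle : 𝔪n n ω (An n ω) ≤ 𝔪n n ω (thickening ε (An n ω)) :=
      measure_mono (self_subset_thickening hε _)
    show ENNReal.ofReal (a / 2) ≤ _
    rw [ENNReal.ofReal_le_iff_le_toReal (by exact (tsub_le_self.trans_lt htop.lt_top).ne),
      ENNReal.toReal_sub_of_le hle htop]
    simp only [Mn, Mε] at hkey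
    linarith
  calc P {ω | a ≤ |(𝔪n n ω (An n ω)).toReal - (𝔪 ω (A ω)).toReal|}
      ≤ P (F n ∪ G n ∪ H n) := measure_mono hincl
    _ ≤ P (F n ∪ G n) + P (H n) := measure_union_le _ _
    _ ≤ P (F n) + P (G n) + P (H n) := by gcongr; exact measure_union_le _ _
    _ ≤ δ / 3 + δ / 3 + δ / 3 := by
        gcongr
        · exact (hN n hn).1.le
        · exact (hN n hn).2.le
        · exact (le_iSup (fun n => P (H n)) n).trans hsup.le
    _ = δ := ENNReal.add_thirds δ
end
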